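/- Let n ≥ 1. For each of Green's relations K ∈ {R, L, J, H, D}, and for all α, β ∈ P_n and i, j ∈ ℕ: (i,α) K (j,β) holds in P_n^Φ if and only if i = j and α K β holds in P_n. Moreover, the D-classes of P_n^Φ coincide with its J-classes and are precisely the sets D_{qi} := {i} × D_q for 0 ≤ q ≤ n and i ∈ ℕ; the principal ideal of P_n^Φ generated by any element of D_{qi} is I_{qi} := {i, i+1, i+2, …} × I_q; and I_{qi} ⊆ I_{rj} if and only if q ≤ r and i ≥ j. -/

import Mathlib

namespace TPM

/-- Vertex set `{1,…,n} ∪ {1',…,n'}`: `Sum.inl` = unprimed (upper row),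
`Sum.inr` = primed (lower row). -/
abbrev V (n : ℕ) := Fin n ⊕ Fin n

/-- The partition monoid `P_n`: set partitions of the `2n`-element set `V n`,
encoded as equivalence relations (setoids). -/
abbrev PM (n : ℕ) := Setoid (V n)

/-- Three-row vertex set of the product graph: top / middle / bottom. -/
abbrev W (n : ℕ) := Fin n ⊕ (Fin n ⊕ Fin n)

variable {n : ℕ}

/-- First factor: unprimed ↦ top, primed ↦ middle. -/
def topMid : V n → W n
  | Sum.inl i => Sum.inl i
  | Sum.inr i => Sum.inr (Sum.inl i)

/-- Second factor: unprimed ↦ middle, primed ↦ bottom. -/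
def midBot : V n → W n
  | Sum.inl i => Sum.inr (Sum.inl i)
  | Sum.inr i => Sum.inr (Sum.inr i)

/-- Embedding of `V n` as top and bottom rows of the three-row set. -/
def topBot : V n → W n
  | Sum.inl i => Sum.inl i
  | Sum.inr i => Sum.inr (Sum.inr i)

/-- Edge relation of the product graph `Γ(α,β)`. -/
def graphRel (α β : PM n) (x y : W n) : Prop :=
  (∃ u v : V n, α.r u v ∧ x = topMid u ∧ y = topMid v) ∨
  (∃ u v : V n, β.r u v ∧ x = midBot u ∧ y = midBot v)

/-- Connectivity (equivalence closure of the edge relation) in `Γ(α,β)`. -/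
def conn (α β : PM n) : W n → W n → Prop := Relation.EqvGen (graphRel α β)

/-- Connectivity in `Γ(α,β)`, as a setoid on the three-row vertex set. -/
def connSetoid (α β : PM n) : Setoid (W n) :=
  ⟨conn α β, Relation.EqvGen.is_equivalence _⟩

/-- The product of two partitions: `x,y` lie in the same block of `αβ` iff they are
connected in `Γ(α,β)`. -/
def pmul (α β : PM n) : PM n :=
  ⟨fun x y => conn α β (topBot x) (topBot y),
    ⟨fun _ => Relation.EqvGen.refl _, fun h => Relation.EqvGen.symm _ _ h, fun h h' => Relation.EqvGen.trans _ _ _ h h'⟩⟩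

/-- A vertex of the three-row set lies in the middle row. -/
def isMid (x : W n) : Prop := ∃ i : Fin n, x = Sum.inr (Sum.inl i)

/-- `Φ(α,β)`: the number of floating components of `Γ(α,β)`, i.e. connected components
all of whose vertices lie in the middle row. -/
noncomputable def Phi (α β : PM n) : ℕ :=
  Nat.card {c : Quotient (connSetoid α β) //
    ∀ x : W n, Quotient.mk (connSetoid α β) x = c → isMid x}

/-- The rank of a partition: the number of transversal blocks (blocks containing both an
unprimed and a primed element). -/
noncomputable def rnk (α : PM n) : ℕ :=
  Nat.card {c : Quotient α //
    (∃ i : Fin n, Quotient.mk α (Sum.inl i) = c) ∧ ∃ i : Fin n, Quotient.mk α (Sum.inr i) = c}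

/-- Which row of `V n` a point lies in. -/
def side : V n → Bool
  | Sum.inl _ => true
  | Sum.inr _ => false

/-- `α̂`: split each transversal of `α` into its unprimed part and its primed part. -/
def hat (α : PM n) : PM n :=
  ⟨fun x y => α.r x y ∧ side x = side y,
    ⟨fun x => ⟨α.iseqv.refl x, rfl⟩,
     fun h => ⟨α.iseqv.symm h.1, h.2.symm⟩,
     fun h h' => ⟨α.iseqv.trans h.1 h'.1, h.2.trans h'.2⟩⟩⟩

/-- The twisted product on `ℕ × P_n`:  `(i,α)(j,β) = (i + j + Φ(α,β), αβ)`. -/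
noncomputable def tmul (a b : ℕ × PM n) : ℕ × PM n :=
  (a.1 + b.1 + Phi a.2 b.2, pmul a.2 b.2)

/-- A congruence on a set equipped with a binary operation: an equivalence relation
compatible with the operation on both sides. -/
def IsCongruence {M : Type*} (mul : M → M → M) (σ : M → M → Prop) : Prop :=
  Equivalence σ ∧ ∀ x y a, σ x y → σ (mul a x) (mul a y) ∧ σ (mul x a) (mul y a)

/-- Green's relation `R`: equality of the right ideals `xM = yM`. -/
def greenR {M : Type*} (mul : M → M → M) (x y : M) : Prop :=
  Set.range (mul x) = Set.range (mul y)

/-- Green's relation `L`: `Mx = My`. -/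
def greenL {M : Type*} (mul : M → M → M) (x y : M) : Prop :=
  Set.range (fun a => mul a x) = Set.range (fun a => mul a y)

/-- The principal two-sided ideal `MxM`. -/
def jSet {M : Type*} (mul : M → M → M) (x : M) : Set M :=
  Set.range (fun p : M × M => mul (mul p.1 x) p.2)

/-- Green's relation `J`: `MxM = MyM`. -/
def greenJ {M : Type*} (mul : M → M → M) (x y : M) : Prop :=
  jSet mul x = jSet mul y

/-- Green's relation `H = R ∩ L`. -/
def greenH {M : Type*} (mul : M → M → M) (x y : M) : Prop :=
  greenR mul x y ∧ greenL mul x y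

/-- Green's relation `D = R ∘ L`. -/
def greenD {M : Type*} (mul : M → M → M) (x y : M) : Prop :=
  ∃ z, greenR mul x z ∧ greenL mul z y

/-- `pd(α,β)` satisfies `P`, where `α` has `p` transversals: there are representatives
`a s` of the upper parts of the `p` (pairwise distinct) transversals of `α`, with `b s`
representing the corresponding lower parts, and a permutation `π` with `P π` such that the
block of `β` containing `a s` contains `b (π s)`.  (For H-related `α, β ∈ D_p` this says
exactly that some representation of the permutational difference `pd(α,β)` satisfies `P`.) -/
def pdIn (p : ℕ) (P : Equiv.Perm (Fin p) → Prop) (α β : PM n) : Prop :=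
  ∃ (a b : Fin p → Fin n) (π : Equiv.Perm (Fin p)),
    (∀ s t, α.r (Sum.inl (a s)) (Sum.inl (a t)) → s = t) ∧
    (∀ s, α.r (Sum.inl (a s)) (Sum.inr (b s))) ∧
    (∀ s, β.r (Sum.inl (a s)) (Sum.inr (b (π s)))) ∧
    P π

/-- The relation `ν_N` on `D_p`, for a subgroup `N ≤ S_p`:  H-related pairs of rank-`p`
partitions whose permutational difference lies in `N`. -/
def nuRel (p : ℕ) (N : Subgroup (Equiv.Perm (Fin p))) (α β : PM n) : Prop :=
  rnk α = p ∧ rnk β = p ∧ greenH pmul α β ∧ pdIn p (· ∈ N) α β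

/-- The congruence `(m, m+d)^♯` on the additive monoid `ℕ` (intended for `d ≥ 1`). -/
def natCong (m d : ℕ) (i j : ℕ) : Prop :=
  i = j ∨ (m ≤ i ∧ m ≤ j ∧ i % d = j % d)

/-- `min θ ≤ i` for a congruence `θ` on `ℕ` (with `min Δ_ℕ = ∞`). -/
def minLE (θ : ℕ → ℕ → Prop) (i : ℕ) : Prop :=
  ∃ a b, θ a b ∧ a ≠ b ∧ a ≤ i

/-- `k ≤ min θ` for a congruence `θ` on `ℕ` (with `min Δ_ℕ = ∞`). -/
def leMin (k : ℕ) (θ : ℕ → ℕ → Prop) : Prop :=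
  ∀ a b, θ a b → a ≠ b → k ≤ a

/-- The possible entries of a C-matrix. -/
inductive CEntry : Type
  | delta | muUp | muDown | mu | lam | rho | R
  | nsym (q : ℕ) (N : Subgroup (Equiv.Perm (Fin q)))

/-- Whether a C-matrix entry is an N-symbol. -/
def isNsym : CEntry → Prop
  | CEntry.nsym _ _ => True
  | _ => False

/-- The allowed values of the symbol `ζ` in row types RT2, RT5, RT6. -/
def isZeta (e : CEntry) : Prop :=
  e = CEntry.mu ∨ e = CEntry.muUp ∨ e = CEntry.muDown ∨ e = CEntry.delta

/-- The allowed values of the symbol `ξ` in row types RT4–RT7: any of `μ,ρ,λ,R` if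
`d = 1`, and only `μ` if `d > 1`. -/
def xiOK (d : ℕ) (e : CEntry) : Prop :=
  e = CEntry.mu ∨ (d = 1 ∧ (e = CEntry.rho ∨ e = CEntry.lam ∨ e = CEntry.R))

/-- Row type RT1 for rows 0 and 1: all entries `Δ`. -/
def RT1 (M0 M1 : ℕ → CEntry) : Prop :=
  (∀ i, M0 i = CEntry.delta) ∧ (∀ i, M1 i = CEntry.delta)

/-- Row type RT2. -/
def RT2 (Θ0 Θ1 : ℕ → ℕ → Prop) (M0 M1 : ℕ → CEntry) : Prop :=
  Θ0 = Eq ∧ Θ1 = Eq ∧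
  ∃ i ζ, isZeta ζ ∧
    (∀ j, j < i → M0 j = CEntry.delta) ∧ (∀ j, i ≤ j → M0 j = CEntry.mu) ∧
    (∀ j, j < i → M1 j = CEntry.delta) ∧ M1 i = ζ ∧ (∀ j, i < j → M1 j = CEntry.mu)

/-- Row type RT3. -/
def RT3 (Θ0 : ℕ → ℕ → Prop) (M0 M1 : ℕ → CEntry) : Prop :=
  ∃ m ξ, Θ0 = natCong m 1 ∧ (ξ = CEntry.rho ∨ ξ = CEntry.lam ∨ ξ = CEntry.R) ∧
    (∀ i, M1 i = CEntry.delta) ∧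
    (∀ j, j < m → M0 j = CEntry.delta) ∧ (∀ j, m ≤ j → M0 j = ξ)

/-- Row type RT4. -/
def RT4 (Θ0 Θ1 : ℕ → ℕ → Prop) (M0 M1 : ℕ → CEntry) : Prop :=
  ∃ m d ξ, 1 ≤ d ∧ Θ0 = natCong m d ∧ Θ1 = natCong m d ∧ xiOK d ξ ∧
    (∀ j, j < m → M0 j = CEntry.delta ∧ M1 j = CEntry.delta) ∧
    (∀ j, m ≤ j → M0 j = ξ ∧ M1 j = ξ)

/-- Row type RT5. -/
def RT5 (Θ0 Θ1 : ℕ → ℕ → Prop) (M0 M1 : ℕ → CEntry) : Prop :=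
  ∃ m d i ξ ζ, 1 ≤ d ∧ i < m ∧ Θ0 = natCong m d ∧ Θ1 = natCong (m + 1) d ∧
    xiOK d ξ ∧ isZeta ζ ∧
    (∀ j, j < i → M0 j = CEntry.delta) ∧ (∀ j, i ≤ j → j < m → M0 j = CEntry.mu) ∧
    (∀ j, m ≤ j → M0 j = ξ) ∧
    (∀ j, j < i → M1 j = CEntry.delta) ∧ M1 i = ζ ∧
    (∀ j, i < j → j ≤ m → M1 j = CEntry.mu) ∧ (∀ j, m < j → M1 j = ξ)

/-- Row type RT6. -/
def RT6 (Θ0 Θ1 : ℕ → ℕ → Prop) (M0 M1 : ℕ → CEntry) : Prop :=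
  ∃ m l d ξ ζ, 1 ≤ d ∧ m < l ∧ Θ0 = natCong m d ∧ Θ1 = natCong l d ∧
    xiOK d ξ ∧ isZeta ζ ∧
    (∀ j, j < m → M0 j = CEntry.delta) ∧ (∀ j, m ≤ j → M0 j = ξ) ∧
    (∀ j, j < l - 1 → M1 j = CEntry.delta) ∧ M1 (l - 1) = ζ ∧ (∀ j, l ≤ j → M1 j = ξ)

/-- Row type RT7. -/
def RT7 (Θ0 Θ1 : ℕ → ℕ → Prop) (M0 M1 : ℕ → CEntry) : Prop :=
  ∃ m l d ξ, 1 ≤ d ∧ 0 < m ∧ m + 1 < l ∧ (l - 1) % d = m % d ∧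
    Θ0 = natCong m d ∧ Θ1 = natCong l d ∧ xiOK d ξ ∧
    (∀ j, j < m - 1 → M0 j = CEntry.delta) ∧ M0 (m - 1) = CEntry.mu ∧
    (∀ j, m ≤ j → M0 j = ξ) ∧
    (∀ j, j < l - 1 → M1 j = CEntry.delta) ∧ M1 (l - 1) = CEntry.mu ∧
    (∀ j, l ≤ j → M1 j = ξ)

/-- Row type RT8 for a row `q ≥ 2`: all entries `Δ`. -/
def RT8 (Mq : ℕ → CEntry) : Prop := ∀ i, Mq i = CEntry.delta

/-- Row type RT9 for a row `q ≥ 2`. -/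
def RT9 (q : ℕ) (Θq : ℕ → ℕ → Prop) (Mq : ℕ → CEntry) : Prop :=
  ∃ (i k : ℕ) (Ns : ℕ → Subgroup (Equiv.Perm (Fin q))),
    i ≤ k ∧ leMin k Θq ∧
    (∀ j, i ≤ j → j ≤ k → Ns j ≠ ⊥ ∧ (Ns j).Normal) ∧
    (∀ j j', i ≤ j → j ≤ j' → j' ≤ k → Ns j ≤ Ns j') ∧
    (∀ j, j < i → Mq j = CEntry.delta) ∧
    (∀ j, i ≤ j → j < k → Mq j = CEntry.nsym q (Ns j)) ∧
    (∀ j, k ≤ j → Mq j = CEntry.nsym q (Ns k))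

/-- Row type RT10 for a row `q ≥ 2`. -/
def RT10 (q : ℕ) (Θq : ℕ → ℕ → Prop) (Mq : ℕ → CEntry) : Prop :=
  ∃ (i m : ℕ) (Ns : ℕ → Subgroup (Equiv.Perm (Fin q))),
    i ≤ m ∧ Θq = natCong m 1 ∧
    (∀ j, i ≤ j → j < m → Ns j ≠ ⊥ ∧ (Ns j).Normal) ∧
    (∀ j j', i ≤ j → j ≤ j' → j' < m → Ns j ≤ Ns j') ∧
    (∀ j, j < i → Mq j = CEntry.delta) ∧
    (∀ j, i ≤ j → j < m → Mq j = CEntry.nsym q (Ns j)) ∧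
    (∀ j, m ≤ j → Mq j = CEntry.R)

/-- A C-pair for `P_n^Φ`: a descending chain `Θ = (θ_0 ⊇ ⋯ ⊇ θ_n)` of congruences on
`(ℕ,+)` together with a matrix `M = (M_{qi})`, `0 ≤ q ≤ n`, `i ∈ ℕ`, whose rows 0 and 1
jointly have one of the types RT1–RT7, whose rows `q ≥ 2` have one of the types RT8–RT10,
and which satisfies the verticality conditions (V1) and (V2). -/
def IsCPair (n : ℕ) (Θ : ℕ → ℕ → ℕ → Prop) (M : ℕ → ℕ → CEntry) : Prop :=
  (∀ q, q ≤ n → IsCongruence (· + ·) (Θ q)) ∧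
  (∀ q r, q ≤ r → r ≤ n → ∀ i j, Θ r i j → Θ q i j) ∧
  (RT1 (M 0) (M 1) ∨ RT2 (Θ 0) (Θ 1) (M 0) (M 1) ∨ RT3 (Θ 0) (M 0) (M 1) ∨
    RT4 (Θ 0) (Θ 1) (M 0) (M 1) ∨ RT5 (Θ 0) (Θ 1) (M 0) (M 1) ∨
    RT6 (Θ 0) (Θ 1) (M 0) (M 1) ∨ RT7 (Θ 0) (Θ 1) (M 0) (M 1)) ∧
  (∀ q, 2 ≤ q → q ≤ n → (RT8 (M q) ∨ RT9 q (Θ q) (M q) ∨ RT10 q (Θ q) (M q))) ∧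
  (∀ q i, 1 ≤ q → q ≤ n → isNsym (M q i) →
    ¬(M (q - 1) i = CEntry.delta ∨ M (q - 1) i = CEntry.muUp ∨
      M (q - 1) i = CEntry.muDown ∨ isNsym (M (q - 1) i))) ∧
  (∀ q i, 2 ≤ q → q ≤ n → M q i = CEntry.R → M (q - 1) i = CEntry.R)

/-- The relation `cg(Θ,M)` on `P_n^Φ` associated with a C-pair `(Θ,M)`: conditions
(C1)–(C8). -/
def cg (n : ℕ) (Θ : ℕ → ℕ → ℕ → Prop) (M : ℕ → ℕ → CEntry)
    (a b : ℕ × PM n) : Prop :=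
  -- (C1)
  (M (rnk a.2) a.1 = CEntry.delta ∧ M (rnk b.2) b.1 = CEntry.delta ∧
    Θ (rnk a.2) a.1 b.1 ∧ a.2 = b.2) ∨
  -- (C2)
  (M (rnk a.2) a.1 = CEntry.R ∧ M (rnk b.2) b.1 = CEntry.R) ∨
  -- (C3)
  (∃ p N, M (rnk a.2) a.1 = CEntry.nsym p N ∧ M (rnk b.2) b.1 = CEntry.nsym p N ∧
    Θ (rnk a.2) a.1 b.1 ∧ rnk a.2 = p ∧ greenH pmul a.2 b.2 ∧ pdIn p (· ∈ N) a.2 b.2) ∨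
  -- (C4)
  (M (rnk a.2) a.1 = CEntry.lam ∧ M (rnk b.2) b.1 = CEntry.lam ∧
    greenL pmul (hat a.2) (hat b.2)) ∨
  -- (C5)
  (M (rnk a.2) a.1 = CEntry.rho ∧ M (rnk b.2) b.1 = CEntry.rho ∧
    greenR pmul (hat a.2) (hat b.2)) ∨
  -- (C6)
  (M (rnk a.2) a.1 = CEntry.muDown ∧ M (rnk b.2) b.1 = CEntry.muDown ∧
    hat a.2 = hat b.2 ∧ greenL pmul a.2 b.2) ∨
  -- (C7)
  (M (rnk a.2) a.1 = CEntry.muUp ∧ M (rnk b.2) b.1 = CEntry.muUp ∧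
    hat a.2 = hat b.2 ∧ greenR pmul a.2 b.2) ∨
  -- (C8)
  (M (rnk a.2) a.1 = CEntry.mu ∧ M (rnk b.2) b.1 = CEntry.mu ∧
    hat a.2 = hat b.2 ∧
    ((rnk a.2 = rnk b.2 ∧ Θ (rnk a.2) a.1 b.1) ∨
     (rnk a.2 ≠ rnk b.2 ∧ Θ 0 (a.1 + rnk b.2) (b.1 + rnk a.2) ∧
        ¬ minLE (Θ (rnk a.2)) a.1 ∧ ¬ minLE (Θ (rnk b.2)) b.1) ∨
     (rnk a.2 ≠ rnk b.2 ∧ Θ 0 (a.1 + rnk b.2) (b.1 + rnk a.2) ∧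
        minLE (Θ (rnk a.2)) a.1 ∧ minLE (Θ (rnk b.2)) b.1)))

/-- The C-pair `(Θ,M)` is exceptional with exceptional row `q`, where
`θ_q = (m, m+2d)^♯`. -/
def ExcAt (n : ℕ) (Θ : ℕ → ℕ → ℕ → Prop) (M : ℕ → ℕ → CEntry) (q m d : ℕ) : Prop :=
  2 ≤ q ∧ q ≤ n ∧ 1 ≤ d ∧ Θ q = natCong m (2 * d) ∧
  ((2 < q ∧ M q m = CEntry.nsym q (alternatingGroup (Fin q))) ∨
   (q = 2 ∧ M 2 m = CEntry.delta ∧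
     (M 1 m = CEntry.mu ∨ M 1 m = CEntry.rho ∨ M 1 m = CEntry.lam ∨ M 1 m = CEntry.R) ∧
     (∀ i j, natCong m d i j → Θ 1 i j)))

/-- The exceptional congruence `cgx(Θ,M)` associated with an exceptional C-pair:
`cg(Θ,M)` together with the pairs of (C9). -/
def cgx (n : ℕ) (Θ : ℕ → ℕ → ℕ → Prop) (M : ℕ → ℕ → CEntry) (q m d : ℕ)
    (a b : ℕ × PM n) : Prop :=
  cg n Θ M a b ∨
  (rnk a.2 = q ∧ rnk b.2 = q ∧ natCong m d a.1 b.1 ∧ ¬ Θ q a.1 b.1 ∧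
    greenH pmul a.2 b.2 ∧ pdIn q (fun π => π ∉ alternatingGroup (Fin q)) a.2 b.2)

/-- The Rees relation of a subset `I`. -/
def rees {M : Type*} (I : Set M) (x y : M) : Prop := x = y ∨ (x ∈ I ∧ y ∈ I)

/-- A (possibly empty) ideal of `P_n^Φ`: `MIM ⊆ I`. -/
def tIdeal (n : ℕ) (I : Set (ℕ × PM n)) : Prop :=
  ∀ a b x, x ∈ I → tmul (tmul a x) b ∈ I

/-- `I(σ)`: the union of all ideals `I` of `P_n^Φ` whose Rees congruence is contained
in `σ`. -/
def Isig (n : ℕ) (σ : (ℕ × PM n) → (ℕ × PM n) → Prop) : Set (ℕ × PM n) :=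
  ⋃₀ {I | tIdeal n I ∧ ∀ x y, rees I x y → σ x y}

/-- The 0-twisted partition monoid `P_{n,0}^Φ`, carried by `Option (P_n)` with
`none` the zero element `✗`. -/
noncomputable def mul0 (a b : Option (PM n)) : Option (PM n) :=
  match a, b with
  | some α, some β => if Phi α β = 0 then some (pmul α β) else none
  | _, _ => none

/-- `rank a ≤ q`, where `rank ✗ = -∞`. -/
def rnkLE (a : Option (PM n)) (q : ℕ) : Prop :=
  ∀ α, a = some α → rnk α ≤ q

/-- The Rees congruence `R_q` on `P_{n,0}^Φ`. -/
def ReesQ (q : ℕ) (a b : Option (PM n)) : Prop :=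
  a = b ∨ (rnkLE a q ∧ rnkLE b q)

/-- Lift a relation on `P_n` to `P_{n,0}^Φ = P_n ∪ {✗}`. -/
def lift2 (r : PM n → PM n → Prop) (a b : Option (PM n)) : Prop :=
  ∃ α β, a = some α ∧ b = some β ∧ r α β


/- ################ auxiliary ################# -/

section Generic
variable {A : Type*} {r : A → A → Prop}

lemma rtg_symm (hs : Symmetric r) : Symmetric (Relation.ReflTransGen r) :=
  by
    haveI : Std.Symm r := ⟨fun a b h => hs h⟩
    exact fun a b h => (Relation.ReflTransGen.symmetric (r := r)).symm a b h

lemma eqvGen_iff_rtg (hs : Symmetric r) {x y : A} :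
    Relation.EqvGen r x y ↔ Relation.ReflTransGen r x y := by
  constructor
  · intro h
    induction h with
    | rel a b h => exact Relation.ReflTransGen.single h
    | refl a => exact Relation.ReflTransGen.refl
    | symm a b h ih => exact rtg_symm hs ih
    | trans a b c h1 h2 ih1 ih2 => exact ih1.trans ih2
  · intro h
    induction h with
    | refl => exact Relation.EqvGen.refl _
    | tail h1 h2 ih => exact Relation.EqvGen.trans _ _ _ ih (Relation.EqvGen.rel _ _ h2)

lemma eqvGen_lift {X : Type*} (S : Setoid X) (f : A → X)
    (h : ∀ ⦃x y⦄, r x y → S (f x) (f y)) {x y : A} (hx : Relation.EqvGen r x y) :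
    S (f x) (f y) := by
  induction hx with
  | rel a b h' => exact h h'
  | refl a => exact S.refl _
  | symm a b h' ih => exact S.symm ih
  | trans a b c h1 h2 ih1 ih2 => exact S.trans ih1 ih2

lemma eqvGen_ind (hs : Symmetric r) {P : A → Prop} {x : A} (h0 : P x)
    (hstep : ∀ ⦃y z⦄, r y z → P y → P z) {y : A} (hxy : Relation.EqvGen r x y) : P y := by
  rw [eqvGen_iff_rtg hs] at hxy
  induction hxy with
  | refl => exact h0
  | tail h1 h2 ih => exact hstep h2 ih

end Generic

lemma graphRel_symm (α β : PM n) : Symmetric (graphRel α β) := by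
  rintro x y (⟨u, v, h, rfl, rfl⟩ | ⟨u, v, h, rfl, rfl⟩)
  · exact Or.inl ⟨v, u, α.symm h, rfl, rfl⟩
  · exact Or.inr ⟨v, u, β.symm h, rfl, rfl⟩

lemma conn_left {α β : PM n} {u v : V n} (h : α.r u v) : conn α β (topMid u) (topMid v) :=
  Relation.EqvGen.rel _ _ (Or.inl ⟨u, v, h, rfl, rfl⟩)

lemma conn_right {α β : PM n} {u v : V n} (h : β.r u v) : conn α β (midBot u) (midBot v) :=
  Relation.EqvGen.rel _ _ (Or.inr ⟨u, v, h, rfl, rfl⟩)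

lemma conn_lift {X : Type*} {α β : PM n} (S : Setoid X) (f : W n → X)
    (hl : ∀ ⦃u v⦄, α.r u v → S (f (topMid u)) (f (topMid v)))
    (hr : ∀ ⦃u v⦄, β.r u v → S (f (midBot u)) (f (midBot v)))
    {x y : W n} (h : conn α β x y) : S (f x) (f y) := by
  refine eqvGen_lift S f ?_ h
  rintro x y (⟨u, v, h', rfl, rfl⟩ | ⟨u, v, h', rfl, rfl⟩)
  · exact hl h'
  · exact hr h'

lemma conn_ind {α β : PM n} {P : W n → Prop} {x : W n} (h0 : P x)
    (hstep : ∀ ⦃y z⦄, graphRel α β y z → P y → P z) {y : W n} (h : conn α β x y) : P y :=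
  eqvGen_ind (graphRel_symm α β) h0 hstep h

/-- index of a point of `V n`. -/
def idx : V n → Fin n
  | Sum.inl i => i
  | Sum.inr i => i

/-- the identity partition. -/
def pone : PM n := Setoid.ker idx

lemma pone_r {u v : V n} : (pone).r u v ↔ idx u = idx v := Iff.rfl

def collapseR : W n → V n
  | Sum.inl i => Sum.inl i
  | Sum.inr (Sum.inl i) => Sum.inr i
  | Sum.inr (Sum.inr i) => Sum.inr i

def collapseL : W n → V n
  | Sum.inl i => Sum.inl i
  | Sum.inr (Sum.inl i) => Sum.inl i
  | Sum.inr (Sum.inr i) => Sum.inr i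

lemma pmul_pone (α : PM n) : pmul α pone = α := by
  apply Setoid.ext; intro x y
  constructor
  · intro h
    have := conn_lift (α := α) (β := pone) α collapseR
      (fun u v h => by cases u <;> cases v <;> exact h)
      (fun u v h => by
        have h' : idx u = idx v := h
        have e1 : collapseR (midBot u) = Sum.inr (idx u) := by cases u <;> rfl
        have e2 : collapseR (midBot v) = Sum.inr (idx v) := by cases v <;> rfl
        rw [e1, e2, h']) h
    cases x <;> cases y <;> exact this
  · intro h
    have h1 : conn α pone (topMid x) (topMid y) := conn_left h
    have h2 : ∀ z : V n, conn α pone (topBot z) (topMid z) := by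
      rintro (i | i)
      · exact Relation.EqvGen.refl _
      · exact Relation.EqvGen.symm _ _ (conn_right (β := pone) (u := Sum.inl i) (v := Sum.inr i) rfl)
    exact Relation.EqvGen.trans _ _ _ (h2 x) (Relation.EqvGen.trans _ _ _ h1
      (Relation.EqvGen.symm _ _ (h2 y)))

lemma pone_pmul (α : PM n) : pmul pone α = α := by
  apply Setoid.ext; intro x y
  constructor
  · intro h
    have := conn_lift (α := pone) (β := α) α collapseL
      (fun u v h => by
        have h' : idx u = idx v := h
        have e1 : collapseL (topMid u) = Sum.inl (idx u) := by cases u <;> rfl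
        have e2 : collapseL (topMid v) = Sum.inl (idx v) := by cases v <;> rfl
        rw [e1, e2, h'])
      (fun u v h => by cases u <;> cases v <;> exact h) h
    cases x <;> cases y <;> exact this
  · intro h
    have h1 : conn pone α (midBot x) (midBot y) := conn_right h
    have h2 : ∀ z : V n, conn pone α (topBot z) (midBot z) := by
      rintro (i | i)
      · exact conn_left (α := pone) (u := Sum.inl i) (v := Sum.inr i) rfl
      · exact Relation.EqvGen.refl _
    exact Relation.EqvGen.trans _ _ _ (h2 x) (Relation.EqvGen.trans _ _ _ h1
      (Relation.EqvGen.symm _ _ (h2 y)))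

lemma Phi_eq_zero {α β : PM n}
    (h : ∀ i : Fin n, ∃ y : W n, ¬ isMid y ∧ conn α β (Sum.inr (Sum.inl i)) y) :
    Phi α β = 0 := by
  rw [Phi, Nat.card_eq_zero]
  left
  constructor
  rintro ⟨c, hc⟩
  obtain ⟨x, rfl⟩ := Quotient.exists_rep c
  obtain ⟨i, rfl⟩ := hc x rfl
  obtain ⟨y, hy, hcy⟩ := h i
  exact hy (hc y (Quotient.sound hcy).symm)

lemma Phi_pone_right (α : PM n) : Phi α pone = 0 := by
  refine Phi_eq_zero fun i => ⟨Sum.inr (Sum.inr i), ?_, ?_⟩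
  · rintro ⟨j, h⟩; simp at h
  · exact conn_right (α := α) (β := pone) (u := Sum.inl i) (v := Sum.inr i) rfl

lemma Phi_pone_left (α : PM n) : Phi pone α = 0 := by
  refine Phi_eq_zero fun i => ⟨Sum.inl i, ?_, ?_⟩
  · rintro ⟨j, h⟩; simp at h
  · exact Relation.EqvGen.symm _ _
      (conn_left (α := pone) (β := α) (u := Sum.inl i) (v := Sum.inr i) rfl)

instance : Finite (PM n) :=
  Finite.of_injective (fun s : PM n => s.r) (fun s t h => by
    cases s; cases t; cases h; rfl)


/- ############ star duality ############ -/

def pstar (α : PM n) : PM n := Setoid.comap Sum.swap α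

lemma pstar_r {α : PM n} {u v : V n} : (pstar α).r u v ↔ α (Sum.swap u) (Sum.swap v) := Iff.rfl

lemma pstar_pstar (α : PM n) : pstar (pstar α) = α := by
  apply Setoid.ext; intro a b
  show α (Sum.swap (Sum.swap a)) (Sum.swap (Sum.swap b)) ↔ _
  rw [Sum.swap_swap, Sum.swap_swap]

def flipW : W n → W n
  | Sum.inl i => Sum.inr (Sum.inr i)
  | Sum.inr (Sum.inl i) => Sum.inr (Sum.inl i)
  | Sum.inr (Sum.inr i) => Sum.inl i

lemma flipW_flipW (x : W n) : flipW (flipW x) = x := by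
  rcases x with i | i | i <;> rfl

lemma flipW_topMid (u : V n) : flipW (topMid u) = midBot (Sum.swap u) := by cases u <;> rfl
lemma flipW_midBot (u : V n) : flipW (midBot u) = topMid (Sum.swap u) := by cases u <;> rfl
lemma flipW_topBot (u : V n) : flipW (topBot u) = topBot (Sum.swap u) := by cases u <;> rfl

lemma conn_flip {α β : PM n} {x y : W n} (h : conn (pstar β) (pstar α) x y) :
    conn α β (flipW x) (flipW y) := by
  refine conn_lift (connSetoid α β) flipW ?_ ?_ h
  · intro u v h'
    rw [flipW_topMid, flipW_topMid]
    exact conn_right h'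
  · intro u v h'
    rw [flipW_midBot, flipW_midBot]
    exact conn_left h'

lemma conn_flip' {α β : PM n} {x y : W n} (h : conn α β x y) :
    conn (pstar β) (pstar α) (flipW x) (flipW y) := by
  refine conn_lift (connSetoid (pstar β) (pstar α)) flipW ?_ ?_ h
  · intro u v h'
    rw [flipW_topMid, flipW_topMid]
    refine conn_right ?_
    rw [pstar_r, Sum.swap_swap, Sum.swap_swap]; exact h'
  · intro u v h'
    rw [flipW_midBot, flipW_midBot]
    refine conn_left ?_
    rw [pstar_r, Sum.swap_swap, Sum.swap_swap]; exact h'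

lemma pstar_pmul (α β : PM n) : pstar (pmul α β) = pmul (pstar β) (pstar α) := by
  apply Setoid.ext; intro a b
  show conn α β (topBot (Sum.swap a)) (topBot (Sum.swap b)) ↔
    conn (pstar β) (pstar α) (topBot a) (topBot b)
  constructor
  · intro h
    have := conn_flip' h
    rw [flipW_topBot, flipW_topBot, Sum.swap_swap, Sum.swap_swap] at this
    exact this
  · intro h
    have := conn_flip h
    rw [flipW_topBot, flipW_topBot] at this
    exact this

lemma isMid_flipW {x : W n} : isMid (flipW x) ↔ isMid x := by
  rcases x with i | i | i
  · constructor
    · rintro ⟨j, h⟩; exact absurd h (by simp [flipW])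
    · rintro ⟨j, h⟩; simp at h
  · simp [flipW, isMid]
  · constructor
    · rintro ⟨j, h⟩; simp [flipW] at h
    · rintro ⟨j, h⟩; simp at h

lemma Phi_pstar (α β : PM n) : Phi (pstar β) (pstar α) = Phi α β := by
  have sound : ∀ x y : W n, conn (pstar β) (pstar α) x y →
      Quotient.mk (connSetoid α β) (flipW x) = Quotient.mk (connSetoid α β) (flipW y) :=
    fun x y h => Quotient.sound (conn_flip h)
  refine Nat.card_eq_of_bijective
    (fun c => ⟨Quotient.lift (fun w => Quotient.mk (connSetoid α β) (flipW w)) sound c.1, ?_⟩) ⟨?_, ?_⟩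
  · obtain ⟨c, hc⟩ := c
    obtain ⟨w, rfl⟩ := Quotient.exists_rep c
    intro x hx
    have : conn α β x (flipW w) := Quotient.exact hx
    have h2 : conn (pstar β) (pstar α) (flipW x) w := by
      have := conn_flip' this
      rwa [flipW_flipW] at this
    have := hc _ (Quotient.sound h2)
    rwa [← isMid_flipW, flipW_flipW x] at this
  · rintro ⟨c1, h1⟩ ⟨c2, h2⟩ h
    obtain ⟨w1, rfl⟩ := Quotient.exists_rep c1
    obtain ⟨w2, rfl⟩ := Quotient.exists_rep c2
    simp only [Subtype.mk_eq_mk, Quotient.lift_mk] at h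
    have : conn α β (flipW w1) (flipW w2) := Quotient.exact h
    have := conn_flip' this
    rw [flipW_flipW, flipW_flipW] at this
    exact Subtype.ext (Quotient.sound this)
  · rintro ⟨c, hc⟩
    obtain ⟨w, rfl⟩ := Quotient.exists_rep c
    refine ⟨⟨Quotient.mk _ (flipW w), ?_⟩, ?_⟩
    · intro x hx
      have : conn (pstar β) (pstar α) x (flipW w) := Quotient.exact hx
      have := conn_flip this
      rw [flipW_flipW] at this
      have h3 := hc _ (Quotient.sound this)
      rwa [← isMid_flipW, flipW_flipW x] at h3
    · exact Subtype.ext (by show Quotient.mk _ (flipW (flipW w)) = _; rw [flipW_flipW])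

lemma rnk_pstar (α : PM n) : rnk (pstar α) = rnk α := by
  have sound : ∀ x y : V n, (pstar α).r x y →
      Quotient.mk α (Sum.swap x) = Quotient.mk α (Sum.swap y) :=
    fun x y h => Quotient.sound h
  refine Nat.card_eq_of_bijective
    (fun c => ⟨Quotient.lift (fun v => Quotient.mk α (Sum.swap v)) sound c.1, ?_⟩) ⟨?_, ?_⟩
  · obtain ⟨c, hc⟩ := c
    obtain ⟨⟨i, hi⟩, ⟨j, hj⟩⟩ := hc
    obtain ⟨w, rfl⟩ := Quotient.exists_rep c
    constructor
    · refine ⟨j, ?_⟩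
      show Quotient.mk α (Sum.inl j) = Quotient.mk α (Sum.swap w)
      have hj' : (pstar α).r (Sum.inr j) w := Quotient.exact hj
      exact Quotient.sound (show α (Sum.inl j) (Sum.swap w) from hj')
    · refine ⟨i, ?_⟩
      show Quotient.mk α (Sum.inr i) = Quotient.mk α (Sum.swap w)
      have hi' : (pstar α).r (Sum.inl i) w := Quotient.exact hi
      exact Quotient.sound (show α (Sum.inr i) (Sum.swap w) from hi')
  · rintro ⟨c1, h1⟩ ⟨c2, h2⟩ h
    obtain ⟨w1, rfl⟩ := Quotient.exists_rep c1
    obtain ⟨w2, rfl⟩ := Quotient.exists_rep c2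
    simp only [Subtype.mk_eq_mk, Quotient.lift_mk] at h
    have : α (Sum.swap w1) (Sum.swap w2) := Quotient.exact h
    exact Subtype.ext (Quotient.sound this)
  · rintro ⟨c, hc⟩
    obtain ⟨w, rfl⟩ := Quotient.exists_rep c
    refine ⟨⟨Quotient.mk (pstar α) (Sum.swap w), ?_⟩, ?_⟩
    · obtain ⟨⟨i, hi⟩, ⟨j, hj⟩⟩ := hc
      constructor
      · refine ⟨j, Quotient.sound ?_⟩
        show α (Sum.swap (Sum.inl j)) (Sum.swap (Sum.swap w))
        rw [Sum.swap_swap]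
        exact Quotient.exact hj
      · refine ⟨i, Quotient.sound ?_⟩
        show α (Sum.swap (Sum.inr i)) (Sum.swap (Sum.swap w))
        rw [Sum.swap_swap]
        exact Quotient.exact hi
    · refine Subtype.ext ?_
      simp only [Quotient.lift_mk]
      rw [Sum.swap_swap]


/- ############ four-row graph, associativity ############ -/

abbrev W4 (n : ℕ) := Fin n ⊕ (Fin n ⊕ (Fin n ⊕ Fin n))

def m12 : V n → W4 n
  | Sum.inl i => Sum.inl i
  | Sum.inr i => Sum.inr (Sum.inl i)

def m23 : V n → W4 n
  | Sum.inl i => Sum.inr (Sum.inl i)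
  | Sum.inr i => Sum.inr (Sum.inr (Sum.inl i))

def m34 : V n → W4 n
  | Sum.inl i => Sum.inr (Sum.inr (Sum.inl i))
  | Sum.inr i => Sum.inr (Sum.inr (Sum.inr i))

def e14 : V n → W4 n
  | Sum.inl i => Sum.inl i
  | Sum.inr i => Sum.inr (Sum.inr (Sum.inr i))

def E4 (α β γ : PM n) (x y : W4 n) : Prop :=
  (∃ u v : V n, α.r u v ∧ x = m12 u ∧ y = m12 v) ∨
  (∃ u v : V n, β.r u v ∧ x = m23 u ∧ y = m23 v) ∨
  (∃ u v : V n, γ.r u v ∧ x = m34 u ∧ y = m34 v)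

def conn4 (α β γ : PM n) : W4 n → W4 n → Prop := Relation.EqvGen (E4 α β γ)

def conn4Setoid (α β γ : PM n) : Setoid (W4 n) :=
  ⟨conn4 α β γ, Relation.EqvGen.is_equivalence _⟩

lemma E4_symm (α β γ : PM n) : Symmetric (E4 α β γ) := by
  rintro x y (⟨u, v, h, rfl, rfl⟩ | ⟨u, v, h, rfl, rfl⟩ | ⟨u, v, h, rfl, rfl⟩)
  · exact Or.inl ⟨v, u, α.symm h, rfl, rfl⟩
  · exact Or.inr (Or.inl ⟨v, u, β.symm h, rfl, rfl⟩)
  · exact Or.inr (Or.inr ⟨v, u, γ.symm h, rfl, rfl⟩)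

def k123 : W n → W4 n
  | Sum.inl i => Sum.inl i
  | Sum.inr (Sum.inl i) => Sum.inr (Sum.inl i)
  | Sum.inr (Sum.inr i) => Sum.inr (Sum.inr (Sum.inl i))

def j134 : W n → W4 n
  | Sum.inl i => Sum.inl i
  | Sum.inr (Sum.inl i) => Sum.inr (Sum.inr (Sum.inl i))
  | Sum.inr (Sum.inr i) => Sum.inr (Sum.inr (Sum.inr i))

lemma k123_topMid (u : V n) : k123 (topMid u) = m12 u := by cases u <;> rfl
lemma k123_midBot (u : V n) : k123 (midBot u) = m23 u := by cases u <;> rfl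
lemma k123_topBot (u : V n) : k123 (topBot u) = j134 (topMid u) := by cases u <;> rfl
lemma j134_midBot (u : V n) : j134 (midBot u) = m34 u := by cases u <;> rfl
lemma j134_topBot (u : V n) : j134 (topBot u) = e14 u := by cases u <;> rfl

lemma lift_k123 {α β γ : PM n} {x y : W n} (h : conn α β x y) :
    conn4 α β γ (k123 x) (k123 y) := by
  refine conn_lift (conn4Setoid α β γ) k123 ?_ ?_ h
  · intro u v h'
    rw [k123_topMid, k123_topMid]
    exact Relation.EqvGen.rel _ _ (Or.inl ⟨u, v, h', rfl, rfl⟩)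
  · intro u v h'
    rw [k123_midBot, k123_midBot]
    exact Relation.EqvGen.rel _ _ (Or.inr (Or.inl ⟨u, v, h', rfl, rfl⟩))

lemma lift_j134 {α β γ : PM n} {x y : W n} (h : conn (pmul α β) γ x y) :
    conn4 α β γ (j134 x) (j134 y) := by
  refine conn_lift (conn4Setoid α β γ) j134 ?_ ?_ h
  · intro u v h'
    have h2 : conn α β (topBot u) (topBot v) := h'
    have := lift_k123 (γ := γ) h2
    rwa [k123_topBot, k123_topBot] at this
  · intro u v h'
    rw [j134_midBot, j134_midBot]
    exact Relation.EqvGen.rel _ _ (Or.inr (Or.inr ⟨u, v, h', rfl, rfl⟩))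

/-- invariant for the backward direction of the four-row description of `(αβ)γ`. -/
def good (α β γ : PM n) (x : V n) : W4 n → Prop
  | Sum.inl i => conn (pmul α β) γ (topBot x) (Sum.inl i)
  | Sum.inr (Sum.inl i) => ∃ u : V n,
      conn (pmul α β) γ (topBot x) (topMid u) ∧ conn α β (topBot u) (Sum.inr (Sum.inl i))
  | Sum.inr (Sum.inr (Sum.inl i)) => conn (pmul α β) γ (topBot x) (Sum.inr (Sum.inl i))
  | Sum.inr (Sum.inr (Sum.inr i)) => conn (pmul α β) γ (topBot x) (Sum.inr (Sum.inr i))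

lemma good_m12 {α β γ : PM n} {x : V n} {w : V n} :
    good α β γ x (m12 w) ↔
      ∃ u : V n, conn (pmul α β) γ (topBot x) (topMid u) ∧ conn α β (topBot u) (topMid w) := by
  cases w with
  | inl i =>
    show conn (pmul α β) γ (topBot x) (Sum.inl i) ↔ _
    constructor
    · intro h
      exact ⟨Sum.inl i, h, Relation.EqvGen.refl _⟩
    · rintro ⟨u, h1, h2⟩
      have h3 : (pmul α β).r u (Sum.inl i) := h2
      exact Relation.EqvGen.trans _ _ _ h1 (conn_left h3)
  | inr i => exact Iff.rfl

lemma good_m23 {α β γ : PM n} {x : V n} {w : V n} :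
    good α β γ x (m23 w) ↔
      ∃ u : V n, conn (pmul α β) γ (topBot x) (topMid u) ∧ conn α β (topBot u) (midBot w) := by
  cases w with
  | inl i => exact Iff.rfl
  | inr i =>
    show conn (pmul α β) γ (topBot x) (Sum.inr (Sum.inl i)) ↔ _
    constructor
    · intro h
      exact ⟨Sum.inr i, h, Relation.EqvGen.refl _⟩
    · rintro ⟨u, h1, h2⟩
      have h3 : (pmul α β).r u (Sum.inr i) := h2
      exact Relation.EqvGen.trans _ _ _ h1 (conn_left h3)

lemma good_m34 {α β γ : PM n} {x : V n} {w : V n} :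
    good α β γ x (m34 w) ↔ conn (pmul α β) γ (topBot x) (midBot w) := by
  cases w <;> exact Iff.rfl

lemma good_base {α β γ : PM n} (x : V n) : good α β γ x (e14 x) := by
  cases x with
  | inl i => exact Relation.EqvGen.refl _
  | inr i => exact Relation.EqvGen.refl _

lemma good_step {α β γ : PM n} {x : V n} {y z : W4 n}
    (h : E4 α β γ y z) (hy : good α β γ x y) : good α β γ x z := by
  rcases h with ⟨u, v, h', rfl, rfl⟩ | ⟨u, v, h', rfl, rfl⟩ | ⟨u, v, h', rfl, rfl⟩
  · rw [good_m12] at hy ⊢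
    obtain ⟨w, h1, h2⟩ := hy
    exact ⟨w, h1, Relation.EqvGen.trans _ _ _ h2 (conn_left h')⟩
  · rw [good_m23] at hy ⊢
    obtain ⟨w, h1, h2⟩ := hy
    exact ⟨w, h1, Relation.EqvGen.trans _ _ _ h2 (conn_right h')⟩
  · rw [good_m34] at hy ⊢
    exact Relation.EqvGen.trans _ _ _ hy (conn_right h')

lemma claimA {α β γ : PM n} {x y : V n} :
    (pmul (pmul α β) γ).r x y ↔ conn4 α β γ (e14 x) (e14 y) := by
  constructor
  · intro h
    have := lift_j134 (h : conn (pmul α β) γ (topBot x) (topBot y))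
    rwa [j134_topBot, j134_topBot] at this
  · intro h
    have hg : good α β γ x (e14 y) := eqvGen_ind (E4_symm α β γ) (good_base x) (fun _ _ => good_step) h
    cases y with
    | inl i => exact hg
    | inr i => exact hg

def flip4 : W4 n → W4 n
  | Sum.inl i => Sum.inr (Sum.inr (Sum.inr i))
  | Sum.inr (Sum.inl i) => Sum.inr (Sum.inr (Sum.inl i))
  | Sum.inr (Sum.inr (Sum.inl i)) => Sum.inr (Sum.inl i)
  | Sum.inr (Sum.inr (Sum.inr i)) => Sum.inl i

lemma flip4_flip4 (x : W4 n) : flip4 (flip4 x) = x := by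
  rcases x with i | i | i | i <;> rfl

lemma flip4_m12 (u : V n) : flip4 (m12 u) = m34 (Sum.swap u) := by cases u <;> rfl
lemma flip4_m23 (u : V n) : flip4 (m23 u) = m23 (Sum.swap u) := by cases u <;> rfl
lemma flip4_m34 (u : V n) : flip4 (m34 u) = m12 (Sum.swap u) := by cases u <;> rfl
lemma flip4_e14 (u : V n) : flip4 (e14 u) = e14 (Sum.swap u) := by cases u <;> rfl

lemma conn4_flip {α β γ : PM n} {x y : W4 n}
    (h : conn4 (pstar γ) (pstar β) (pstar α) x y) : conn4 α β γ (flip4 x) (flip4 y) := by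
  refine eqvGen_lift (conn4Setoid α β γ) flip4 ?_ h
  rintro x y (⟨u, v, h', rfl, rfl⟩ | ⟨u, v, h', rfl, rfl⟩ | ⟨u, v, h', rfl, rfl⟩)
  · rw [flip4_m12, flip4_m12]
    exact Relation.EqvGen.rel _ _ (Or.inr (Or.inr ⟨_, _, h', rfl, rfl⟩))
  · rw [flip4_m23, flip4_m23]
    exact Relation.EqvGen.rel _ _ (Or.inr (Or.inl ⟨_, _, h', rfl, rfl⟩))
  · rw [flip4_m34, flip4_m34]
    exact Relation.EqvGen.rel _ _ (Or.inl ⟨_, _, h', rfl, rfl⟩)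

lemma conn4_flip' {α β γ : PM n} {x y : W4 n}
    (h : conn4 α β γ x y) : conn4 (pstar γ) (pstar β) (pstar α) (flip4 x) (flip4 y) := by
  refine eqvGen_lift (conn4Setoid (pstar γ) (pstar β) (pstar α)) flip4 ?_ h
  rintro x y (⟨u, v, h', rfl, rfl⟩ | ⟨u, v, h', rfl, rfl⟩ | ⟨u, v, h', rfl, rfl⟩)
  · rw [flip4_m12, flip4_m12]
    refine Relation.EqvGen.rel _ _ (Or.inr (Or.inr ⟨_, _, ?_, rfl, rfl⟩))
    rw [pstar_r, Sum.swap_swap, Sum.swap_swap]; exact h'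
  · rw [flip4_m23, flip4_m23]
    refine Relation.EqvGen.rel _ _ (Or.inr (Or.inl ⟨_, _, ?_, rfl, rfl⟩))
    rw [pstar_r, Sum.swap_swap, Sum.swap_swap]; exact h'
  · rw [flip4_m34, flip4_m34]
    refine Relation.EqvGen.rel _ _ (Or.inl ⟨_, _, ?_, rfl, rfl⟩)
    rw [pstar_r, Sum.swap_swap, Sum.swap_swap]; exact h'

lemma pmul_assoc (α β γ : PM n) : pmul (pmul α β) γ = pmul α (pmul β γ) := by
  have key : pmul α (pmul β γ) = pstar (pmul (pmul (pstar γ) (pstar β)) (pstar α)) := by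
    rw [pstar_pmul, pstar_pmul, pstar_pstar, pstar_pstar, pstar_pstar]
  apply Setoid.ext; intro a b
  rw [claimA]
  rw [key]
  constructor
  · intro h
    show (pmul (pmul (pstar γ) (pstar β)) (pstar α)).r (Sum.swap a) (Sum.swap b)
    rw [claimA]
    have := conn4_flip' h
    rwa [flip4_e14, flip4_e14] at this
  · intro h
    have h2 : (pmul (pmul (pstar γ) (pstar β)) (pstar α)).r (Sum.swap a) (Sum.swap b) := h
    rw [claimA] at h2
    have := conn4_flip h2
    rwa [flip4_e14, flip4_e14, Sum.swap_swap, Sum.swap_swap] at this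

/- ############ counting: the cocycle identity for Phi ############ -/

lemma card_split {X : Type*} [Finite X] (P Q : X → Prop) :
    Nat.card {x // P x} = Nat.card {x // P x ∧ Q x} + Nat.card {x // P x ∧ ¬ Q x} := by
  classical
  rw [← Nat.card_sum]
  apply Nat.card_congr
  exact { toFun := fun a => if h : Q a.1 then Sum.inl ⟨a.1, a.2, h⟩ else Sum.inr ⟨a.1, a.2, h⟩
          invFun := fun s => match s with
            | Sum.inl a => ⟨a.1, a.2.1⟩
            | Sum.inr a => ⟨a.1, a.2.1⟩
          left_inv := by rintro ⟨x, hx⟩; by_cases h : Q x <;> simp [h]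
          right_inv := by rintro (⟨x, hx⟩ | ⟨x, hx⟩) <;> simp [hx.2] }

def quotEquiv {X Y : Type*} (S : Setoid X) (T : Setoid Y) (f : X → Y) (g : Y → X)
    (hf : ∀ x x', S x x' → T (f x) (f x')) (hg : ∀ y y', T y y' → S (g y) (g y'))
    (hgf : ∀ x, S (g (f x)) x) (hfg : ∀ y, T (f (g y)) y) : Quotient S ≃ Quotient T where
  toFun := Quotient.lift (fun x => Quotient.mk T (f x)) (fun a b h => Quotient.sound (hf a b h))
  invFun := Quotient.lift (fun y => Quotient.mk S (g y)) (fun a b h => Quotient.sound (hg a b h))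
  left_inv := by
    rintro ⟨x⟩
    exact Quotient.sound (hgf x)
  right_inv := by
    rintro ⟨y⟩
    exact Quotient.sound (hfg y)

abbrev wmid (i : Fin n) : W n := Sum.inr (Sum.inl i)

def inRow2 (z : W4 n) : Prop := ∃ i : Fin n, z = Sum.inr (Sum.inl i)
def inRow3 (z : W4 n) : Prop := ∃ i : Fin n, z = Sum.inr (Sum.inr (Sum.inl i))
def inRow23 (z : W4 n) : Prop := inRow2 z ∨ inRow3 z

def sub2 (α β γ : PM n) (c : Quotient (conn4Setoid α β γ)) : Prop :=
  ∀ z, Quotient.mk (conn4Setoid α β γ) z = c → inRow2 z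
def sub3 (α β γ : PM n) (c : Quotient (conn4Setoid α β γ)) : Prop :=
  ∀ z, Quotient.mk (conn4Setoid α β γ) z = c → inRow3 z
def sub23 (α β γ : PM n) (c : Quotient (conn4Setoid α β γ)) : Prop :=
  ∀ z, Quotient.mk (conn4Setoid α β γ) z = c → inRow23 z

/-- invariant: reachable set in the 4-row graph from a floating middle vertex of `Γ(α,β)`. -/
def good1 (α β : PM n) (i₀ : Fin n) : W4 n → Prop
  | Sum.inl _ => False
  | Sum.inr (Sum.inl i) => conn α β (wmid i₀) (wmid i)
  | Sum.inr (Sum.inr _) => False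

lemma good1_step {α β γ : PM n} {i₀ : Fin n}
    (Hf : ∀ w, conn α β (wmid i₀) w → isMid w) {y z : W4 n}
    (h : E4 α β γ y z) (hy : good1 α β i₀ y) : good1 α β i₀ z := by
  rcases h with ⟨u, v, h', rfl, rfl⟩ | ⟨u, v, h', rfl, rfl⟩ | ⟨u, v, h', rfl, rfl⟩
  · cases u with
    | inl i => exact hy.elim
    | inr i =>
      cases v with
      | inl t =>
        exfalso
        have : conn α β (wmid i₀) (topMid (Sum.inl t)) :=
          Relation.EqvGen.trans _ _ _ hy (conn_left h')
        obtain ⟨j, hj⟩ := Hf _ this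
        simp [topMid] at hj
      | inr j => exact Relation.EqvGen.trans _ _ _ hy (conn_left h')
  · cases u with
    | inl i =>
      cases v with
      | inl j => exact Relation.EqvGen.trans _ _ _ hy (conn_right h')
      | inr j =>
        exfalso
        have : conn α β (wmid i₀) (midBot (Sum.inr j)) :=
          Relation.EqvGen.trans _ _ _ hy (conn_right h')
        obtain ⟨l, hl⟩ := Hf _ this
        simp [midBot] at hl
    | inr i => exact hy.elim
  · cases u with
    | inl i => exact hy.elim
    | inr i => exact hy.elim

lemma E1 (α β γ : PM n) : Phi α β = Nat.card {c : Quotient (conn4Setoid α β γ) // sub2 α β γ c} := by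
  have float_shape : ∀ (d : Quotient (connSetoid α β)),
      (∀ x : W n, Quotient.mk (connSetoid α β) x = d → isMid x) →
      ∀ x : W n, Quotient.mk (connSetoid α β) x = d →
      ∀ w, conn α β x w → isMid w := by
    intro d hd x hx w hw
    exact hd w (by rw [← hx]; exact (Quotient.sound hw).symm)
  refine Nat.card_eq_of_bijective (fun d =>
    ⟨Quotient.lift (fun w => Quotient.mk (conn4Setoid α β γ) (k123 w))
      (fun a b h => Quotient.sound (lift_k123 h)) d.1, ?_⟩) ⟨?_, ?_⟩
  · obtain ⟨d, hd⟩ := d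
    obtain ⟨w, rfl⟩ := Quotient.exists_rep d
    obtain ⟨i₀, rfl⟩ := hd w rfl
    intro z hz
    have hconn : conn4 α β γ (k123 (wmid i₀)) z := Quotient.exact hz.symm
    have Hf : ∀ w, conn α β (wmid i₀) w → isMid w := float_shape _ hd _ rfl
    have hg : good1 α β i₀ z := by
      refine eqvGen_ind (E4_symm α β γ) ?_ (fun _ _ h h' => good1_step Hf h h') hconn
      exact Relation.EqvGen.refl _
    rcases z with t | t | t
    · exact hg.elim
    · exact ⟨t, rfl⟩
    · exact hg.elim
  · rintro ⟨d1, h1⟩ ⟨d2, h2⟩ h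
    obtain ⟨w1, rfl⟩ := Quotient.exists_rep d1
    obtain ⟨w2, rfl⟩ := Quotient.exists_rep d2
    obtain ⟨i1, rfl⟩ := h1 w1 rfl
    obtain ⟨i2, rfl⟩ := h2 w2 rfl
    simp only [Subtype.mk_eq_mk, Quotient.lift_mk] at h
    have hconn : conn4 α β γ (k123 (wmid i1)) (k123 (wmid i2)) := Quotient.exact h
    have Hf : ∀ w, conn α β (wmid i1) w → isMid w := float_shape _ h1 _ rfl
    have hg : good1 α β i1 (k123 (wmid i2)) := by
      refine eqvGen_ind (E4_symm α β γ) ?_ (fun _ _ h h' => good1_step Hf h h') hconn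
      exact Relation.EqvGen.refl _
    exact Subtype.ext (Quotient.sound hg)
  · rintro ⟨c, hc⟩
    obtain ⟨z, rfl⟩ := Quotient.exists_rep c
    obtain ⟨m, rfl⟩ := hc z rfl
    refine ⟨⟨Quotient.mk (connSetoid α β) (wmid m), ?_⟩, ?_⟩
    · intro x hx
      have hconn : conn α β x (wmid m) := Quotient.exact hx
      have : conn4 α β γ (k123 x) (k123 (wmid m)) := lift_k123 hconn
      obtain ⟨t, ht⟩ := hc (k123 x) (Quotient.sound this)
      rcases x with i | i | i
      · simp [k123] at ht
      · exact ⟨i, rfl⟩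
      · simp [k123] at ht
    · exact Subtype.ext rfl

/-- invariant: reachable set in the 4-row graph from a floating middle vertex of `Γ(αβ,γ)`. -/
def good2 (α β γ : PM n) (i₀ : Fin n) : W4 n → Prop
  | Sum.inl _ => False
  | Sum.inr (Sum.inl i) => ∃ u : V n,
      conn (pmul α β) γ (wmid i₀) (topMid u) ∧ conn α β (topBot u) (wmid i)
  | Sum.inr (Sum.inr (Sum.inl i)) => conn (pmul α β) γ (wmid i₀) (wmid i)
  | Sum.inr (Sum.inr (Sum.inr _)) => False

lemma good2_step {α β γ : PM n} {i₀ : Fin n}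
    (Hf : ∀ w, conn (pmul α β) γ (wmid i₀) w → isMid w) {y z : W4 n}
    (h : E4 α β γ y z) (hy : good2 α β γ i₀ y) : good2 α β γ i₀ z := by
  rcases h with ⟨u, v, h', rfl, rfl⟩ | ⟨u, v, h', rfl, rfl⟩ | ⟨u, v, h', rfl, rfl⟩
  · cases u with
    | inl i => exact hy.elim
    | inr i =>
      obtain ⟨w₀, hw1, hw2⟩ := hy
      cases v with
      | inl t =>
        exfalso
        have h2 : conn α β (topBot w₀) (topBot (Sum.inl t)) :=
          Relation.EqvGen.trans _ _ _ hw2 (conn_left h')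
        have h3 : (pmul α β).r w₀ (Sum.inl t) := h2
        have h4 : conn (pmul α β) γ (wmid i₀) (topMid (Sum.inl t)) :=
          Relation.EqvGen.trans _ _ _ hw1 (conn_left h3)
        obtain ⟨j, hj⟩ := Hf _ h4
        simp [topMid] at hj
      | inr j =>
        exact ⟨w₀, hw1, Relation.EqvGen.trans _ _ _ hw2 (conn_left h')⟩
  · cases u with
    | inl i =>
      obtain ⟨w₀, hw1, hw2⟩ := hy
      cases v with
      | inl j =>
        exact ⟨w₀, hw1, Relation.EqvGen.trans _ _ _ hw2 (conn_right h')⟩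
      | inr j =>
        have h2 : conn α β (topBot w₀) (topBot (Sum.inr j)) :=
          Relation.EqvGen.trans _ _ _ hw2 (conn_right h')
        have h3 : (pmul α β).r w₀ (Sum.inr j) := h2
        exact Relation.EqvGen.trans _ _ _ hw1 (conn_left h3)
    | inr i =>
      cases v with
      | inl j =>
        exact ⟨Sum.inr i, hy, conn_right h'⟩
      | inr j =>
        have h3 : (pmul α β).r (Sum.inr i) (Sum.inr j) := conn_right h'
        exact Relation.EqvGen.trans _ _ _ hy (conn_left h3)
  · cases u with
    | inl i =>
      cases v with
      | inl j => exact Relation.EqvGen.trans _ _ _ hy (conn_right h')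
      | inr j =>
        exfalso
        have h2 : conn (pmul α β) γ (wmid i₀) (midBot (Sum.inr j)) :=
          Relation.EqvGen.trans _ _ _ hy (conn_right h')
        obtain ⟨l, hl⟩ := Hf _ h2
        simp [midBot] at hl
    | inr i => exact hy.elim

lemma E2 (α β γ : PM n) :
    Phi (pmul α β) γ = Nat.card {c : Quotient (conn4Setoid α β γ) //
      sub23 α β γ c ∧ ¬ sub2 α β γ c} := by
  have float_shape : ∀ (d : Quotient (connSetoid (pmul α β) γ)),
      (∀ x : W n, Quotient.mk (connSetoid (pmul α β) γ) x = d → isMid x) →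
      ∀ x : W n, Quotient.mk (connSetoid (pmul α β) γ) x = d →
      ∀ w, conn (pmul α β) γ x w → isMid w := by
    intro d hd x hx w hw
    exact hd w (by rw [← hx]; exact (Quotient.sound hw).symm)
  refine Nat.card_eq_of_bijective (fun d =>
    ⟨Quotient.lift (fun w => Quotient.mk (conn4Setoid α β γ) (j134 w))
      (fun a b h => Quotient.sound (lift_j134 h)) d.1, ?_, ?_⟩) ⟨?_, ?_⟩
  · obtain ⟨d, hd⟩ := d
    obtain ⟨w, rfl⟩ := Quotient.exists_rep d
    obtain ⟨i₀, rfl⟩ := hd w rfl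
    intro z hz
    have hconn : conn4 α β γ (j134 (wmid i₀)) z := Quotient.exact hz.symm
    have Hf : ∀ w, conn (pmul α β) γ (wmid i₀) w → isMid w := float_shape _ hd _ rfl
    have hg : good2 α β γ i₀ z := by
      refine eqvGen_ind (E4_symm α β γ) ?_ (fun _ _ h h' => good2_step Hf h h') hconn
      exact Relation.EqvGen.refl _
    rcases z with t | t | t | t
    · exact hg.elim
    · exact Or.inl ⟨t, rfl⟩
    · exact Or.inr ⟨t, rfl⟩
    · exact hg.elim
  · obtain ⟨d, hd⟩ := d
    obtain ⟨w, rfl⟩ := Quotient.exists_rep d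
    obtain ⟨i₀, rfl⟩ := hd w rfl
    intro hsub
    obtain ⟨t, ht⟩ := hsub (j134 (wmid i₀)) rfl
    simp [j134, wmid] at ht
  · rintro ⟨d1, h1a⟩ ⟨d2, h2a⟩ h
    obtain ⟨w1, rfl⟩ := Quotient.exists_rep d1
    obtain ⟨w2, rfl⟩ := Quotient.exists_rep d2
    obtain ⟨i1, rfl⟩ := h1a w1 rfl
    obtain ⟨i2, rfl⟩ := h2a w2 rfl
    simp only [Subtype.mk_eq_mk, Quotient.lift_mk] at h
    have hconn : conn4 α β γ (j134 (wmid i1)) (j134 (wmid i2)) := Quotient.exact h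
    have Hf : ∀ w, conn (pmul α β) γ (wmid i1) w → isMid w := float_shape _ h1a _ rfl
    have hg : good2 α β γ i1 (j134 (wmid i2)) := by
      refine eqvGen_ind (E4_symm α β γ) ?_ (fun _ _ h h' => good2_step Hf h h') hconn
      exact Relation.EqvGen.refl _
    exact Subtype.ext (Quotient.sound hg)
  · rintro ⟨c, hc23, hc2⟩
    have hz : ∃ z, Quotient.mk (conn4Setoid α β γ) z = c ∧ ¬ inRow2 z := by
      by_contra hcon
      push_neg at hcon
      exact hc2 fun z hz => hcon z hz
    obtain ⟨z, hzc, hz2⟩ := hz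
    have h23 := hc23 z hzc
    have : inRow3 z := by
      rcases h23 with h | h
      · exact absurd h hz2
      · exact h
    obtain ⟨m, rfl⟩ := this
    refine ⟨⟨Quotient.mk (connSetoid (pmul α β) γ) (wmid m), ?_⟩, ?_⟩
    · intro x hx
      have hconn : conn (pmul α β) γ x (wmid m) := Quotient.exact hx
      have h4 : conn4 α β γ (j134 x) (j134 (wmid m)) := lift_j134 hconn
      have hmem : Quotient.mk (conn4Setoid α β γ) (j134 x) = c := by
        rw [← hzc]; exact Quotient.sound h4
      have := hc23 (j134 x) hmem
      rcases x with i | i | i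
      · exfalso
        rcases this with ⟨t, ht⟩ | ⟨t, ht⟩
        · simp [j134] at ht
        · simp [j134] at ht
      · exact ⟨i, rfl⟩
      · exfalso
        rcases this with ⟨t, ht⟩ | ⟨t, ht⟩
        · simp [j134] at ht
        · simp [j134] at ht
    · exact Subtype.ext hzc

lemma inRow2_flip4 {z : W4 n} : inRow2 (flip4 z) ↔ inRow3 z := by
  rcases z with i | i | i | i <;> simp [flip4, inRow2, inRow3]

lemma inRow3_flip4 {z : W4 n} : inRow3 (flip4 z) ↔ inRow2 z := by
  rcases z with i | i | i | i <;> simp [flip4, inRow2, inRow3]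

lemma Phi_cocycle (α β γ : PM n) :
    Phi α β + Phi (pmul α β) γ = Phi β γ + Phi α (pmul β γ) := by
  classical
  -- the flip equivalence between the two 4-row quotients
  let e : Quotient (conn4Setoid (pstar γ) (pstar β) (pstar α)) ≃ Quotient (conn4Setoid α β γ) :=
    quotEquiv _ _ flip4 flip4 (fun x x' h => conn4_flip h)
      (fun y y' h => conn4_flip' h)
      (fun x => by rw [flip4_flip4])
      (fun y => by rw [flip4_flip4])
  have he : ∀ z : W4 n, e (Quotient.mk _ z) = Quotient.mk _ (flip4 z) := fun z => rfl
  have hsub2' : ∀ c, sub2 (pstar γ) (pstar β) (pstar α) c ↔ sub3 α β γ (e c) := by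
    intro c
    obtain ⟨z, rfl⟩ := Quotient.exists_rep c
    rw [he]
    constructor
    · intro h w hw
      have hconn : conn4 α β γ w (flip4 z) := Quotient.exact hw
      have := conn4_flip' hconn
      rw [flip4_flip4] at this
      have := h _ (Quotient.sound this)
      rwa [inRow2_flip4] at this
    · intro h w hw
      have hconn : conn4 (pstar γ) (pstar β) (pstar α) w z := Quotient.exact hw
      have := conn4_flip hconn
      have := h _ (Quotient.sound this)
      rwa [inRow3_flip4] at this
  have hsub23' : ∀ c, sub23 (pstar γ) (pstar β) (pstar α) c ↔ sub23 α β γ (e c) := by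
    intro c
    obtain ⟨z, rfl⟩ := Quotient.exists_rep c
    rw [he]
    constructor
    · intro h w hw
      have hconn : conn4 α β γ w (flip4 z) := Quotient.exact hw
      have h2 := conn4_flip' hconn
      rw [flip4_flip4] at h2
      have h3 := h _ (Quotient.sound h2)
      rcases h3 with h3 | h3
      · right; rwa [← inRow3_flip4, flip4_flip4] at h3
      · left; rwa [← inRow2_flip4, flip4_flip4] at h3
    · intro h w hw
      have hconn : conn4 (pstar γ) (pstar β) (pstar α) w z := Quotient.exact hw
      have h2 := conn4_flip hconn
      have h3 := h _ (Quotient.sound h2)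
      rcases h3 with h3 | h3
      · right; rwa [inRow2_flip4] at h3
      · left; rwa [inRow3_flip4] at h3
  have eq1 : Phi β γ = Nat.card {c : Quotient (conn4Setoid α β γ) // sub3 α β γ c} := by
    rw [← Phi_pstar β γ, E1 (pstar γ) (pstar β) (pstar α)]
    exact Nat.card_congr (Equiv.subtypeEquiv e hsub2')
  have eq2 : Phi α (pmul β γ) = Nat.card {c : Quotient (conn4Setoid α β γ) //
      sub23 α β γ c ∧ ¬ sub3 α β γ c} := by
    rw [← Phi_pstar α (pmul β γ), pstar_pmul, E2 (pstar γ) (pstar β) (pstar α)]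
    refine Nat.card_congr (Equiv.subtypeEquiv e ?_)
    intro c
    rw [hsub23', hsub2']
  have eq3 : Phi α β = Nat.card {c : Quotient (conn4Setoid α β γ) // sub2 α β γ c} := E1 α β γ
  have eq4 : Phi (pmul α β) γ = Nat.card {c : Quotient (conn4Setoid α β γ) //
      sub23 α β γ c ∧ ¬ sub2 α β γ c} := E2 α β γ
  have hs2 : ∀ c, sub2 α β γ c → sub23 α β γ c := fun c h z hz => Or.inl (h z hz)
  have hs3 : ∀ c, sub3 α β γ c → sub23 α β γ c := fun c h z hz => Or.inr (h z hz)
  have split2 := card_split (X := Quotient (conn4Setoid α β γ)) (sub23 α β γ) (sub2 α β γ)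
  have split3 := card_split (X := Quotient (conn4Setoid α β γ)) (sub23 α β γ) (sub3 α β γ)
  have simp2 : Nat.card {c // sub23 α β γ c ∧ sub2 α β γ c} =
      Nat.card {c // sub2 α β γ c} :=
    Nat.card_congr (Equiv.subtypeEquivRight (fun c => ⟨fun h => h.2, fun h => ⟨hs2 c h, h⟩⟩))
  have simp3 : Nat.card {c // sub23 α β γ c ∧ sub3 α β γ c} =
      Nat.card {c // sub3 α β γ c} :=
    Nat.card_congr (Equiv.subtypeEquivRight (fun c => ⟨fun h => h.2, fun h => ⟨hs3 c h, h⟩⟩))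
  rw [eq1, eq2, eq3, eq4]
  rw [simp2] at split2
  rw [simp3] at split3
  omega

/- ############ rank ############ -/

def IsTv (α : PM n) (c : Quotient α) : Prop :=
  (∃ i : Fin n, Quotient.mk α (Sum.inl i) = c) ∧ ∃ i : Fin n, Quotient.mk α (Sum.inr i) = c

lemma rnk_def (α : PM n) : rnk α = Nat.card {c : Quotient α // IsTv α c} := rfl

lemma rnk_le_n (α : PM n) : rnk α ≤ n := by
  classical
  rw [rnk_def]
  have : Nat.card {c : Quotient α // IsTv α c} ≤ Nat.card (Fin n) := by
    refine Nat.card_le_card_of_injective (fun c => Classical.choose c.2.1) ?_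
    intro c1 c2 h
    have h' : Classical.choose c1.2.1 = Classical.choose c2.2.1 := h
    have h1 := Classical.choose_spec c1.2.1
    have h2 := Classical.choose_spec c2.2.1
    refine Subtype.ext ?_
    rw [← h1, ← h2, h']
  simpa using this

lemma exists_transversal_on_path {α β : PM n} {i : Fin n} {y : W n}
    (h : Relation.ReflTransGen (graphRel α β) (Sum.inl i) y)
    (hy : ∀ j : Fin n, y ≠ Sum.inl j) :
    ∃ k m, α.r (Sum.inl k) (Sum.inr m) ∧ conn α β (Sum.inl i) (Sum.inl k) := by
  induction h with
  | refl => exact absurd rfl (hy i)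
  | @tail b c hxb hbc ih =>
    rcases b with t | t | t
    · -- b is a top vertex
      rcases hbc with ⟨u, v, huv, hb, hc⟩ | ⟨u, v, huv, hb, hc⟩
      · cases u with
        | inl s =>
          have hst : s = t := by simpa [topMid] using hb.symm
          subst hst
          cases v with
          | inl j => exact absurd (show c = Sum.inl j by simpa [topMid] using hc) (hy j)
          | inr m =>
            exact ⟨s, m, huv, (eqvGen_iff_rtg (graphRel_symm α β)).2 hxb⟩
        | inr s => simp [topMid] at hb
      · cases u with
        | inl s => simp [midBot] at hb
        | inr s => simp [midBot] at hb
    · -- b is a middle vertex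
      exact ih (fun j hj => by simp at hj)
    · -- b is a bottom vertex
      exact ih (fun j hj => by simp at hj)

lemma rnk_pmul_le_left (α β : PM n) : rnk (pmul α β) ≤ rnk α := by
  classical
  have key : ∀ c : {c : Quotient (pmul α β) // IsTv (pmul α β) c},
      ∃ k : Fin n, (∃ m, α.r (Sum.inl k) (Sum.inr m)) ∧
        ∃ i : Fin n, Quotient.mk (pmul α β) (Sum.inl i) = c.1 ∧
          conn α β (Sum.inl i) (Sum.inl k) := by
    rintro ⟨c, ⟨i, hi⟩, ⟨j, hj⟩⟩
    have hrel : (pmul α β).r (Sum.inl i) (Sum.inr j) := Quotient.exact (hi.trans hj.symm)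
    have hconn : conn α β (Sum.inl i) (Sum.inr (Sum.inr j)) := hrel
    have hconn' : Relation.ReflTransGen (graphRel α β) (Sum.inl i) (Sum.inr (Sum.inr j)) :=
      (eqvGen_iff_rtg (graphRel_symm α β)).1 hconn
    obtain ⟨k, m, hkm, hck⟩ := exists_transversal_on_path hconn' (fun t ht => by simp at ht)
    exact ⟨k, ⟨m, hkm⟩, i, hi, hck⟩
  choose k hk i hi hconn using key
  rw [rnk_def, rnk_def]
  refine Nat.card_le_card_of_injective (fun c =>
    ⟨Quotient.mk α (Sum.inl (k c)), ⟨k c, rfl⟩,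
      ⟨Classical.choose (hk c), Quotient.sound (α.symm (Classical.choose_spec (hk c)))⟩⟩) ?_
  intro c1 c2 h
  have h2 : α.r (Sum.inl (k c1)) (Sum.inl (k c2)) := Quotient.exact (congrArg Subtype.val h)
  have e1 : conn α β (Sum.inl (k c1)) (Sum.inl (k c2)) := conn_left h2
  have e2 : conn α β (Sum.inl (i c1)) (Sum.inl (i c2)) :=
    Relation.EqvGen.trans _ _ _ (hconn c1)
      (Relation.EqvGen.trans _ _ _ e1 (Relation.EqvGen.symm _ _ (hconn c2)))
  have e3 : (pmul α β).r (Sum.inl (i c1)) (Sum.inl (i c2)) := e2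
  refine Subtype.ext ?_
  rw [← hi c1, ← hi c2]
  exact Quotient.sound e3

lemma rnk_pmul_le_right (α β : PM n) : rnk (pmul α β) ≤ rnk β := by
  have := rnk_pmul_le_left (pstar β) (pstar α)
  rw [← pstar_pmul, rnk_pstar, rnk_pstar] at this
  exact this

/- ############ the partitions ε_q ############ -/

noncomputable def eps (q : ℕ) : PM n :=
  Setoid.ker (fun x : V n => if (idx x : ℕ) < q then Sum.inl (idx x) else Sum.inr x : V n → Fin n ⊕ V n)

lemma eps_rel {q : ℕ} {x y : V n} : (eps q).r x y ↔
    (if (idx x : ℕ) < q then (Sum.inl (idx x) : Fin n ⊕ V n) else Sum.inr x) =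
    (if (idx y : ℕ) < q then (Sum.inl (idx y) : Fin n ⊕ V n) else Sum.inr y) := Iff.rfl

lemma eps_inj_top {q : ℕ} {i j : Fin n} (h : (eps q : PM n).r (Sum.inl i) (Sum.inl j)) :
    i = j := by
  rw [eps_rel] at h
  simp only [idx] at h
  by_cases h1 : (i : ℕ) < q <;> by_cases h2 : (j : ℕ) < q <;>
    simp only [h1, h2, if_pos, if_neg, if_true, if_false] at h
  · exact Sum.inl.inj h
  · simp at h
  · simp at h
  · exact Sum.inl.inj (Sum.inr.inj h)

lemma eps_tv_aux {q : ℕ} {i j : Fin n} (h : (eps q : PM n).r (Sum.inl i) (Sum.inr j)) :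
    i = j ∧ (i : ℕ) < q := by
  rw [eps_rel] at h
  simp only [idx] at h
  by_cases h1 : (i : ℕ) < q <;> by_cases h2 : (j : ℕ) < q <;>
    simp only [h1, h2, if_pos, if_neg, if_true, if_false] at h
  · exact ⟨Sum.inl.inj h, h1⟩
  · simp at h
  · simp at h
  · exact absurd (Sum.inr.inj h) (by simp)

lemma eps_tv_rel {q : ℕ} {i : Fin n} (h : (i : ℕ) < q) :
    (eps q : PM n).r (Sum.inl i) (Sum.inr i) := by
  rw [eps_rel]
  simp [idx, h]

lemma rnk_eps {q : ℕ} (hq : q ≤ n) : rnk (eps q : PM n) = q := by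
  classical
  rw [rnk_def]
  have : Nat.card (Fin q) = Nat.card {c : Quotient (eps q : PM n) // IsTv _ c} := by
    refine Nat.card_eq_of_bijective (fun s =>
      ⟨Quotient.mk _ (Sum.inl (⟨s.1, lt_of_lt_of_le s.2 hq⟩ : Fin n)), ?_, ?_⟩) ⟨?_, ?_⟩
    · exact ⟨_, rfl⟩
    · exact ⟨⟨s.1, lt_of_lt_of_le s.2 hq⟩,
        (Quotient.sound (eps_tv_rel (by simpa using s.2))).symm⟩
    · intro s1 s2 h
      have h2 : (eps q : PM n).r (Sum.inl ⟨s1.1, lt_of_lt_of_le s1.2 hq⟩)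
          (Sum.inl ⟨s2.1, lt_of_lt_of_le s2.2 hq⟩) := Quotient.exact (congrArg Subtype.val h)
      have := eps_inj_top h2
      exact Fin.ext (by simpa using congrArg Fin.val this)
    · rintro ⟨c, ⟨i, hi⟩, ⟨j, hj⟩⟩
      have hrel : (eps q : PM n).r (Sum.inl i) (Sum.inr j) := Quotient.exact (hi.trans hj.symm)
      obtain ⟨rfl, hlt⟩ := eps_tv_aux hrel
      refine ⟨⟨i.1, hlt⟩, ?_⟩
      have he : (⟨(⟨i.1, hlt⟩ : Fin q).1, lt_of_lt_of_le (⟨i.1, hlt⟩ : Fin q).2 hq⟩ : Fin n) = i :=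
        Fin.ext rfl
      exact Subtype.ext (by simp only; rw [he]; exact hi)
  rw [← this]
  simp

/- ############ float elimination ############ -/

lemma isMid_topBot (x : V n) : ¬ isMid (topBot x) := by
  rintro ⟨i, hi⟩
  cases x <;> simp [topBot] at hi

/-- `u`'s component in `Γ(α,δ₀)` is floating. -/
def flV (α δ₀ : PM n) (u : V n) : Prop := ∀ w, conn α δ₀ (midBot u) w → isMid w

open Classical in
/-- the recolouring merging all floating components into the component of the
bottom vertex `z0`. -/
noncomputable def elimC (α δ₀ : PM n) (z0 : Fin n) (u : V n) : Quotient (connSetoid α δ₀) :=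
  if flV α δ₀ u then Quotient.mk _ (Sum.inr (Sum.inr z0)) else Quotient.mk _ (midBot u)

lemma elimC_pos {α δ₀ : PM n} {z0 : Fin n} {u : V n} (h : flV α δ₀ u) :
    elimC α δ₀ z0 u = Quotient.mk _ (Sum.inr (Sum.inr z0)) := by
  rw [elimC, if_pos h]

lemma elimC_neg {α δ₀ : PM n} {z0 : Fin n} {u : V n} (h : ¬ flV α δ₀ u) :
    elimC α δ₀ z0 u = Quotient.mk _ (midBot u) := by
  rw [elimC, if_neg h]

lemma float_elim_right (hn : 1 ≤ n) (α δ₀ : PM n) :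
    ∃ δ, pmul α δ = pmul α δ₀ ∧ Phi α δ = 0 := by
  classical
  set z0 : Fin n := ⟨0, hn⟩ with hz0def
  set C : V n → Quotient (connSetoid α δ₀) := elimC α δ₀ z0 with hC
  have flV_conn : ∀ {u v : V n}, conn α δ₀ (midBot u) (midBot v) →
      (flV α δ₀ u ↔ flV α δ₀ v) := by
    intro u v h
    constructor
    · intro hf w hw
      exact hf w (Relation.EqvGen.trans _ _ _ h hw)
    · intro hf w hw
      exact hf w (Relation.EqvGen.trans _ _ _ (Relation.EqvGen.symm _ _ h) hw)
  have old_edge_new : ∀ {u v : V n}, δ₀.r u v → (Setoid.ker C).r u v := by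
    intro u v h
    have hconn : conn α δ₀ (midBot u) (midBot v) := conn_right h
    show C u = C v
    by_cases hf : flV α δ₀ u
    · rw [hC, elimC_pos hf, elimC_pos ((flV_conn hconn).1 hf)]
    · rw [hC, elimC_neg hf, elimC_neg (fun hv => hf ((flV_conn hconn).2 hv))]
      exact Quotient.sound hconn
  have old_to_new : ∀ {x y : W n}, conn α δ₀ x y → conn α (Setoid.ker C) x y := by
    intro x y h
    refine conn_lift (connSetoid α (Setoid.ker C)) id ?_ ?_ h
    · intro u v h'; exact conn_left h'
    · intro u v h'; exact conn_right (old_edge_new h')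
  refine ⟨Setoid.ker C, ?_, ?_⟩
  · -- products agree
    apply Setoid.ext; intro x y
    constructor
    · -- new implies old (nontrivial direction)
      intro h
      set P : W n → Prop := fun z =>
        conn α δ₀ (topBot x) z ∨
        (conn α δ₀ (topBot x) (Sum.inr (Sum.inr z0)) ∧
          (conn α δ₀ z (Sum.inr (Sum.inr z0)) ∨ ∀ w, conn α δ₀ z w → isMid w)) with hP
      have ptrans : ∀ {z z' : W n}, conn α δ₀ z z' → P z → P z' := by
        intro z z' hzz hp
        rcases hp with hp | ⟨hb, hp⟩
        · exact Or.inl (Relation.EqvGen.trans _ _ _ hp hzz)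
        · refine Or.inr ⟨hb, ?_⟩
          rcases hp with hp | hp
          · exact Or.inl (Relation.EqvGen.trans _ _ _ (Relation.EqvGen.symm _ _ hzz) hp)
          · exact Or.inr fun w hw => hp w (Relation.EqvGen.trans _ _ _ hzz hw)
      have hbase : P (topBot x) := Or.inl (Relation.EqvGen.refl _)
      have hstep : ∀ ⦃z z' : W n⦄, graphRel α (Setoid.ker C) z z' → P z → P z' := by
        rintro z z' (⟨u, v, huv, rfl, rfl⟩ | ⟨u, v, huv, rfl, rfl⟩) hp
        · exact ptrans (conn_left huv) hp
        · -- a new-δ edge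
          have hCuv : C u = C v := huv
          by_cases hfu : flV α δ₀ u <;> by_cases hfv : flV α δ₀ v
          · -- both floating
            have hb : conn α δ₀ (topBot x) (Sum.inr (Sum.inr z0)) := by
              rcases hp with hp | ⟨hb, _⟩
              · exact absurd (hfu _ (Relation.EqvGen.symm _ _ hp)) (isMid_topBot x)
              · exact hb
            exact Or.inr ⟨hb, Or.inr hfv⟩
          · -- u floating, v not
            have hbv : conn α δ₀ (Sum.inr (Sum.inr z0)) (midBot v) := by
              rw [hC, elimC_pos hfu, elimC_neg hfv] at hCuv
              exact Quotient.exact hCuv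
            have hb : conn α δ₀ (topBot x) (Sum.inr (Sum.inr z0)) := by
              rcases hp with hp | ⟨hb, _⟩
              · exact absurd (hfu _ (Relation.EqvGen.symm _ _ hp)) (isMid_topBot x)
              · exact hb
            exact Or.inl (Relation.EqvGen.trans _ _ _ hb hbv)
          · -- u not floating, v floating
            have hub : conn α δ₀ (midBot u) (Sum.inr (Sum.inr z0)) := by
              rw [hC, elimC_neg hfu, elimC_pos hfv] at hCuv
              exact Quotient.exact hCuv
            have hb : conn α δ₀ (topBot x) (Sum.inr (Sum.inr z0)) := by
              rcases hp with hp | ⟨hb, hp2⟩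
              · exact Relation.EqvGen.trans _ _ _ hp hub
              · exact hb
            exact Or.inr ⟨hb, Or.inr hfv⟩
          · -- neither floating
            have huvc : conn α δ₀ (midBot u) (midBot v) := by
              rw [hC, elimC_neg hfu, elimC_neg hfv] at hCuv
              exact Quotient.exact hCuv
            exact ptrans huvc hp
      have hy : P (topBot y) := eqvGen_ind (graphRel_symm _ _) hbase hstep h
      rcases hy with hy | ⟨hb, hy⟩
      · exact hy
      · rcases hy with hy | hy
        · exact Relation.EqvGen.trans _ _ _ hb (Relation.EqvGen.symm _ _ hy)
        · exact absurd (hy _ (Relation.EqvGen.refl _)) (isMid_topBot y)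
    · intro h
      exact old_to_new h
  · -- no floats
    refine Phi_eq_zero fun i => ?_
    by_cases hf : flV α δ₀ (Sum.inl i)
    · refine ⟨Sum.inr (Sum.inr z0), ?_, ?_⟩
      · rintro ⟨j, hj⟩; simp at hj
      · have hrel : (Setoid.ker C).r (Sum.inl i) (Sum.inr z0) := by
          show C _ = C _
          have hnf : ¬ flV α δ₀ (Sum.inr z0) := by
            intro hcon
            exact isMid_topBot (Sum.inr z0) (hcon _ (Relation.EqvGen.refl _))
          rw [hC, elimC_pos hf, elimC_neg hnf]
          rfl
        exact conn_right hrel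
    · rw [flV] at hf
      push_neg at hf
      obtain ⟨w, hw1, hw2⟩ := hf
      exact ⟨w, hw2, old_to_new hw1⟩

lemma float_elim_left (hn : 1 ≤ n) (α γ₀ : PM n) :
    ∃ γ, pmul γ α = pmul γ₀ α ∧ Phi γ α = 0 := by
  obtain ⟨δ, h1, h2⟩ := float_elim_right hn (pstar α) (pstar γ₀)
  refine ⟨pstar δ, ?_, ?_⟩
  · have : pstar (pmul (pstar α) δ) = pstar (pmul (pstar α) (pstar γ₀)) := by rw [h1]
    rw [pstar_pmul, pstar_pmul, pstar_pstar, pstar_pstar] at this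
    exact this
  · have h3 := Phi_pstar (pstar α) δ
    rw [pstar_pstar] at h3
    exact h3.trans h2

/- ############ realizing the J-order ############ -/

noncomputable def tvEquiv (α : PM n) : Fin (rnk α) ≃ {c : Quotient α // IsTv α c} := by
  haveI : Fintype {c : Quotient α // IsTv α c} := Fintype.ofFinite _
  have h : Fintype.card {c : Quotient α // IsTv α c} = rnk α := by
    rw [rnk_def, Nat.card_eq_fintype_card]
  exact (Fintype.equivFinOfCardEq h).symm

section Realize

variable {α β : PM n} {q : ℕ} (f g : Fin q → Fin n) (d : Fin q → Quotient α)
  (e : Fin q → Quotient β)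

open Classical

noncomputable def Fbot (d : Fin q → Quotient α) (e : Fin q → Quotient β) (c : Quotient β) :
    Quotient α ⊕ Quotient β :=
  if h : ∃ s, e s = c then Sum.inl (d (Classical.choose h)) else Sum.inr c

noncomputable def Ff (d : Fin q → Quotient α) (e : Fin q → Quotient β) : W n → Quotient α ⊕ Quotient β
  | Sum.inl i => Sum.inl (Quotient.mk α (Sum.inl i))
  | Sum.inr (Sum.inl j) => Sum.inl (Quotient.mk α (Sum.inr j))
  | Sum.inr (Sum.inr i) => Fbot d e (Quotient.mk β (Sum.inr i))

noncomputable def Gmid (d : Fin q → Quotient α) (e : Fin q → Quotient β) (c : Quotient α) :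
    Quotient β ⊕ Quotient α :=
  if h : ∃ s, d s = c then Sum.inl (e (Classical.choose h)) else Sum.inr c

noncomputable def Gf (d : Fin q → Quotient α) (e : Fin q → Quotient β) : W n → Quotient β ⊕ Quotient α
  | Sum.inl i => Sum.inl (Quotient.mk β (Sum.inl i))
  | Sum.inr (Sum.inl j) => Gmid d e (Quotient.mk α (Sum.inl j))
  | Sum.inr (Sum.inr i) => Sum.inl (Quotient.mk β (Sum.inr i))

noncomputable def cgam (f : Fin q → Fin n) (e : Fin q → Quotient β) : V n → Quotient β ⊕ V n
  | Sum.inl i => Sum.inl (Quotient.mk β (Sum.inl i))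
  | Sum.inr j => if h : ∃ s, f s = j then Sum.inl (e (Classical.choose h)) else Sum.inr (Sum.inr j)

noncomputable def cdel (g : Fin q → Fin n) (e : Fin q → Quotient β) : V n → Quotient β ⊕ V n
  | Sum.inl j => if h : ∃ s, g s = j then Sum.inl (e (Classical.choose h)) else Sum.inr (Sum.inl j)
  | Sum.inr i => Sum.inl (Quotient.mk β (Sum.inr i))

variable (H1 : ∀ s, Quotient.mk α (Sum.inl (f s)) = d s)
  (H2 : ∀ s, Quotient.mk α (Sum.inr (g s)) = d s)
  (H3 : Function.Injective d) (H4 : Function.Injective e)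

include H1 H3 in
lemma f_inj : Function.Injective f := by
  intro s t h
  exact H3 (by rw [← H1, ← H1, h])

include H2 H3 in
lemma g_inj : Function.Injective g := by
  intro s t h
  exact H3 (by rw [← H2, ← H2, h])

include H4 in
lemma Fbot_e (s : Fin q) : Fbot d e (e s) = Sum.inl (d s) := by
  rw [Fbot, dif_pos ⟨s, rfl⟩]
  congr 1
  exact congrArg d (H4 (Classical.choose_spec (⟨s, rfl⟩ : ∃ t, e t = e s)))

include H3 in
lemma Gmid_d (s : Fin q) : Gmid d e (d s) = Sum.inl (e s) := by
  rw [Gmid, dif_pos ⟨s, rfl⟩]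
  congr 1
  exact congrArg e (H3 (Classical.choose_spec (⟨s, rfl⟩ : ∃ t, d t = d s)))

include H3 in
lemma Fbot_inj {c c' : Quotient β} (h : Fbot d e c = Fbot d e c') : c = c' := by
  rw [Fbot, Fbot] at h
  by_cases h1 : ∃ s, e s = c <;> by_cases h2 : ∃ s, e s = c'
  · rw [dif_pos h1, dif_pos h2] at h
    have := H3 (Sum.inl.inj h)
    rw [← Classical.choose_spec h1, ← Classical.choose_spec h2, this]
  · rw [dif_pos h1, dif_neg h2] at h; simp at h
  · rw [dif_neg h1, dif_pos h2] at h; simp at h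
  · rw [dif_neg h1, dif_neg h2] at h; exact Sum.inr.inj h

include H1 H3 H4 in
lemma cgam_f (s : Fin q) : cgam f e (Sum.inr (f s)) = Sum.inl (e s) := by
  rw [cgam, dif_pos ⟨s, rfl⟩]
  congr 1
  exact congrArg e (f_inj f d H1 H3
    (Classical.choose_spec (⟨s, rfl⟩ : ∃ t, f t = f s)))

include H2 H3 H4 in
lemma cdel_g (s : Fin q) : cdel g e (Sum.inl (g s)) = Sum.inl (e s) := by
  rw [cdel, dif_pos ⟨s, rfl⟩]
  congr 1
  exact congrArg e (g_inj g d H2 H3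
    (Classical.choose_spec (⟨s, rfl⟩ : ∃ t, g t = g s)))

include H2 H3 H4 in
lemma cdel_inj {j j' : Fin n}
    (h : cdel g e (Sum.inl j) = cdel g e (Sum.inl j')) : j = j' := by
  simp only [cdel] at h
  by_cases h1 : ∃ s, g s = j <;> by_cases h2 : ∃ s, g s = j'
  · rw [dif_pos h1, dif_pos h2] at h
    have := H4 (Sum.inl.inj h)
    rw [← Classical.choose_spec h1, ← Classical.choose_spec h2, this]
  · rw [dif_pos h1, dif_neg h2] at h; simp at h
  · rw [dif_neg h1, dif_pos h2] at h; simp at h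
  · rw [dif_neg h1, dif_neg h2] at h
    exact Sum.inl.inj (Sum.inr.inj h)

include H1 H3 H4 in
lemma cgam_inj {j j' : Fin n}
    (h : cgam f e (Sum.inr j) = cgam f e (Sum.inr j')) : j = j' := by
  simp only [cgam] at h
  by_cases h1 : ∃ s, f s = j <;> by_cases h2 : ∃ s, f s = j'
  · rw [dif_pos h1, dif_pos h2] at h
    have := H4 (Sum.inl.inj h)
    rw [← Classical.choose_spec h1, ← Classical.choose_spec h2, this]
  · rw [dif_pos h1, dif_neg h2] at h; simp at h
  · rw [dif_neg h1, dif_pos h2] at h; simp at h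
  · rw [dif_neg h1, dif_neg h2] at h
    exact Sum.inr.inj (Sum.inr.inj h)

include H1 H2 H3 H4 in
lemma realize_R1 :
    pmul α (Setoid.ker (cdel g e)) = Setoid.ker (fun x : V n => Ff d e (topBot x)) := by
  have Ff_topMid : ∀ u : V n, Ff d e (topMid u) = Sum.inl (Quotient.mk α u) := by
    rintro (i | j) <;> rfl
  -- the forward edge analysis for δ-edges
  have del_edge : ∀ {u v : V n}, cdel g e u = cdel g e v →
      Ff (n := n) d e (midBot u) = Ff d e (midBot v) := by
    have main : ∀ {j : Fin n} {i : Fin n}, cdel g e (Sum.inl j) = cdel g e (Sum.inr i) →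
        Ff (n := n) d e (midBot (Sum.inl j)) = Ff d e (midBot (Sum.inr i)) := by
      intro j i h
      rw [cdel] at h
      by_cases h1 : ∃ s, g s = j
      · rw [dif_pos h1] at h
        set s₀ := Classical.choose h1 with hs₀
        have hspec : g s₀ = j := Classical.choose_spec h1
        have he : e s₀ = Quotient.mk β (Sum.inr i) := Sum.inl.inj h
        show Sum.inl (Quotient.mk α (Sum.inr j)) = Fbot d e (Quotient.mk β (Sum.inr i))
        rw [← he, Fbot_e d e H4, ← hspec, H2]
      · rw [dif_neg h1] at h; simp [cdel] at h
    rintro (j | i) (j' | i') h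
    · have := cdel_inj g d e H2 H3 H4 h
      rw [this]
    · exact main h
    · exact (main h.symm).symm
    · show Fbot d e _ = Fbot d e _
      have : Quotient.mk β (Sum.inr i) = Quotient.mk β (Sum.inr i') := Sum.inl.inj h
      rw [this]
  apply Setoid.ext; intro x y
  constructor
  · intro h
    exact conn_lift (α := α) (β := Setoid.ker (cdel g e)) (Setoid.ker (Ff (n := n) d e)) id
      (fun u v h' => by
        show Ff d e (topMid u) = Ff d e (topMid v)
        rw [Ff_topMid, Ff_topMid]
        exact congrArg Sum.inl (Quotient.sound h'))
      (fun u v h' => del_edge h') h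
  · -- backward: build explicit paths
    intro h
    have main : ∀ {i i' : Fin n},
        Ff (n := n) d e (topBot (Sum.inl i)) = Ff d e (topBot (Sum.inr i')) →
        (pmul α (Setoid.ker (cdel g e))).r (Sum.inl i) (Sum.inr i') := by
      intro i i' h
      have h' : Sum.inl (Quotient.mk α (Sum.inl i)) = Fbot (n := n) d e (Quotient.mk β (Sum.inr i')) := h
      rw [Fbot] at h'
      by_cases h1 : ∃ s, e s = Quotient.mk β (Sum.inr i')
      · rw [dif_pos h1] at h'
        set s₀ := Classical.choose h1 with hs₀
        have hspec : e s₀ = Quotient.mk β (Sum.inr i') := Classical.choose_spec h1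
        have hd : Quotient.mk α (Sum.inl i) = d s₀ := Sum.inl.inj h'
        have step1 : α.r (Sum.inl i) (Sum.inr (g s₀)) :=
          Quotient.exact (hd.trans (H2 s₀).symm)
        have step2 : (Setoid.ker (cdel g e)).r (Sum.inl (g s₀)) (Sum.inr i') := by
          show cdel g e _ = cdel g e _
          rw [cdel_g g d e H2 H3 H4, cdel, hspec]
        exact Relation.EqvGen.trans _ _ _ (conn_left step1) (conn_right step2)
      · rw [dif_neg h1] at h'; simp at h'
    rcases x with i | i <;> rcases y with i' | i'
    · have : Quotient.mk α (Sum.inl i) = Quotient.mk α (Sum.inl i') := Sum.inl.inj h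
      exact conn_left (Quotient.exact this)
    · exact main h
    · exact (pmul α (Setoid.ker (cdel g e))).symm (main h.symm)
    · have hcc : Quotient.mk β (Sum.inr i) = Quotient.mk β (Sum.inr i') :=
        Fbot_inj d e H3 h
      show conn α (Setoid.ker (cdel g e)) (midBot (Sum.inr i)) (midBot (Sum.inr i'))
      refine conn_right ?_
      show cdel g e _ = cdel g e _
      simp only [cdel]
      rw [hcc]

include H1 H2 H3 H4 in
lemma realize_R2 (H5 : ∀ c, IsTv β c → ∃ s, e s = c) :
    pmul (Setoid.ker (cgam f e)) (Setoid.ker (fun x : V n => Ff d e (topBot x))) = β := by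
  have Gf_topBot_l : ∀ i : Fin n, Gf (n := n) d e (topBot (Sum.inl i)) = Sum.inl (Quotient.mk β (Sum.inl i)) := fun i => rfl
  have Gf_topBot_r : ∀ i : Fin n, Gf (n := n) d e (topBot (Sum.inr i)) = Sum.inl (Quotient.mk β (Sum.inr i)) := fun i => rfl
  -- edges preserve Gf
  have gam_edge : ∀ {u v : V n}, cgam f e u = cgam f e v →
      Gf (n := n) d e (topMid u) = Gf d e (topMid v) := by
    have main : ∀ {i j : Fin n}, cgam f e (Sum.inl i) = cgam f e (Sum.inr j) →
        Gf (n := n) d e (topMid (Sum.inl i)) = Gf d e (topMid (Sum.inr j)) := by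
      intro i j h
      simp only [cgam] at h
      by_cases h1 : ∃ s, f s = j
      · rw [dif_pos h1] at h
        set s₀ := Classical.choose h1 with hs₀
        have hspec : f s₀ = j := Classical.choose_spec h1
        have he : Quotient.mk β (Sum.inl i) = e s₀ := Sum.inl.inj h
        show Sum.inl (Quotient.mk β (Sum.inl i)) = Gmid d e (Quotient.mk α (Sum.inl j))
        rw [← hspec, H1, Gmid_d d e H3, he]
      · rw [dif_neg h1] at h; simp at h
    rintro (i | j) (i' | j') h
    · have : Quotient.mk β (Sum.inl i) = Quotient.mk β (Sum.inl i') := Sum.inl.inj h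
      show Sum.inl _ = Sum.inl _
      rw [this]
    · exact main h
    · exact (main h.symm).symm
    · have := cgam_inj f d e H1 H3 H4 h
      rw [this]
  have adash_edge : ∀ {u v : V n}, Ff (n := n) d e (topBot u) = Ff d e (topBot v) →
      Gf (n := n) d e (midBot u) = Gf d e (midBot v) := by
    have main : ∀ {j i : Fin n}, Ff (n := n) d e (topBot (Sum.inl j)) = Ff d e (topBot (Sum.inr i)) →
        Gf (n := n) d e (midBot (Sum.inl j)) = Gf d e (midBot (Sum.inr i)) := by
      intro j i h
      have h' : Sum.inl (Quotient.mk α (Sum.inl j)) = Fbot (n := n) d e (Quotient.mk β (Sum.inr i)) := h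
      rw [Fbot] at h'
      by_cases h1 : ∃ s, e s = Quotient.mk β (Sum.inr i)
      · rw [dif_pos h1] at h'
        set s₀ := Classical.choose h1 with hs₀
        have hspec : e s₀ = Quotient.mk β (Sum.inr i) := Classical.choose_spec h1
        have hd : Quotient.mk α (Sum.inl j) = d s₀ := Sum.inl.inj h'
        show Gmid d e (Quotient.mk α (Sum.inl j)) = Sum.inl (Quotient.mk β (Sum.inr i))
        rw [hd, Gmid_d d e H3, hspec]
      · rw [dif_neg h1] at h'; simp at h'
    rintro (j | i) (j' | i') h
    · have : Quotient.mk α (Sum.inl j) = Quotient.mk α (Sum.inl j') := Sum.inl.inj h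
      show Gmid d e _ = Gmid d e _
      rw [this]
    · exact main h
    · exact (main h.symm).symm
    · have : Quotient.mk β (Sum.inr i) = Quotient.mk β (Sum.inr i') := Fbot_inj d e H3 h
      show Sum.inl _ = Sum.inl _
      rw [this]
  apply Setoid.ext; intro x y
  constructor
  · intro h
    have hG : Gf (n := n) d e (topBot x) = Gf d e (topBot y) :=
      conn_lift (α := Setoid.ker (cgam f e))
        (β := Setoid.ker (fun x : V n => Ff (n := n) d e (topBot x)))
        (Setoid.ker (Gf (n := n) d e)) id
        (fun u v h' => gam_edge h') (fun u v h' => adash_edge h') h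
    rcases x with i | i <;> rcases y with i' | i'
    · exact Quotient.exact (Sum.inl.inj hG)
    · exact Quotient.exact (Sum.inl.inj hG)
    · exact Quotient.exact (Sum.inl.inj hG)
    · exact Quotient.exact (Sum.inl.inj hG)
  · intro h
    have main : ∀ {i i' : Fin n}, β.r (Sum.inl i) (Sum.inr i') →
        (pmul (Setoid.ker (cgam f e)) (Setoid.ker (fun x : V n => Ff d e (topBot x)))).r
          (Sum.inl i) (Sum.inr i') := by
      intro i i' hβ
      have htv : IsTv β (Quotient.mk β (Sum.inl i)) :=
        ⟨⟨i, rfl⟩, ⟨i', Quotient.sound (β.symm hβ)⟩⟩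
      obtain ⟨s, hs⟩ := H5 _ htv
      have step1 : (Setoid.ker (cgam f e)).r (Sum.inl i) (Sum.inr (f s)) := by
        show cgam f e _ = cgam f e _
        rw [cgam_f f d e H1 H3 H4, cgam, hs]
      have step2 : (Setoid.ker (fun x : V n => Ff (n := n) d e (topBot x))).r
          (Sum.inl (f s)) (Sum.inr i') := by
        show Ff d e (topBot (Sum.inl (f s))) = Ff d e (topBot (Sum.inr i'))
        have hci' : Quotient.mk β (Sum.inr i') = e s := by
          rw [hs]
          exact Quotient.sound (β.symm hβ)
        show Sum.inl (Quotient.mk α (Sum.inl (f s))) = Fbot d e (Quotient.mk β (Sum.inr i'))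
        rw [hci', Fbot_e d e H4, H1]
      exact Relation.EqvGen.trans _ _ _ (conn_left step1) (conn_right step2)
    rcases x with i | i <;> rcases y with i' | i'
    · show conn (Setoid.ker (cgam f e)) (Setoid.ker (fun x : V n => Ff (n := n) d e (topBot x)))
        (topMid (Sum.inl i)) (topMid (Sum.inl i'))
      refine conn_left ?_
      show cgam f e (Sum.inl i) = cgam f e (Sum.inl i')
      show Sum.inl _ = Sum.inl _
      rw [Quotient.sound h]
    · exact main h
    · exact (pmul _ _).symm (main (β.symm h))
    · show conn (Setoid.ker (cgam f e)) (Setoid.ker (fun x : V n => Ff (n := n) d e (topBot x)))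
        (midBot (Sum.inr i)) (midBot (Sum.inr i'))
      refine conn_right ?_
      show Ff d e (topBot (Sum.inr i)) = Ff d e (topBot (Sum.inr i'))
      show Fbot d e _ = Fbot d e _
      rw [Quotient.sound h]
  
end Realize

lemma jrealize {α β : PM n} (hle : rnk β ≤ rnk α) :
    ∃ γ δ : PM n, pmul (pmul γ α) δ = β := by
  classical
  let d : Fin (rnk β) → Quotient α := fun s => ((tvEquiv α) (Fin.castLE hle s)).1
  let e : Fin (rnk β) → Quotient β := fun s => ((tvEquiv β) s).1
  let f : Fin (rnk β) → Fin n := fun s =>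
    Classical.choose ((tvEquiv α (Fin.castLE hle s)).2).1
  let g : Fin (rnk β) → Fin n := fun s =>
    Classical.choose ((tvEquiv α (Fin.castLE hle s)).2).2
  have H1 : ∀ s, Quotient.mk α (Sum.inl (f s)) = d s := fun s =>
    Classical.choose_spec ((tvEquiv α (Fin.castLE hle s)).2).1
  have H2 : ∀ s, Quotient.mk α (Sum.inr (g s)) = d s := fun s =>
    Classical.choose_spec ((tvEquiv α (Fin.castLE hle s)).2).2
  have H3 : Function.Injective d := by
    intro s t h
    have h2 := (tvEquiv α).injective (Subtype.ext h)
    have h3 := congrArg Fin.val h2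
    exact Fin.ext h3
  have H4 : Function.Injective e := fun s t h => (tvEquiv β).injective (Subtype.ext h)
  have H5 : ∀ c, IsTv β c → ∃ s, e s = c := by
    intro c hc
    refine ⟨(tvEquiv β).symm ⟨c, hc⟩, ?_⟩
    show (((tvEquiv β) ((tvEquiv β).symm ⟨c, hc⟩)) : {c : Quotient β // IsTv β c}).1 = c
    rw [Equiv.apply_symm_apply]
  refine ⟨Setoid.ker (cgam f e), Setoid.ker (cdel g e), ?_⟩
  rw [pmul_assoc, realize_R1 f g d e H1 H2 H3 H4, realize_R2 f g d e H1 H2 H3 H4 H5]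

/- ############ powers and stability ############ -/

noncomputable def ppow (c : PM n) : ℕ → PM n
  | 0 => pone
  | k+1 => pmul c (ppow c k)

lemma ppow_add (c : PM n) (a b : ℕ) : pmul (ppow c a) (ppow c b) = ppow c (a + b) := by
  induction a with
  | zero => rw [ppow, pone_pmul, Nat.zero_add]
  | succ k ih =>
    rw [ppow, pmul_assoc, ih, show k + 1 + b = (k + b) + 1 by omega, ppow]

lemma exists_idem_pow' (c : PM n) {x y : ℕ} (hlt : x < y)
    (hfe : ppow c (x + 1) = ppow c (y + 1)) :
    ∃ m, 1 ≤ m ∧ pmul (ppow c m) (ppow c m) = ppow c m := by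
  set a := x + 1 with ha
  set d := y - x with hd
  have hd1 : 1 ≤ d := by omega
  have base : ppow c a = ppow c (a + d) := by
    rw [hfe]; congr 1; omega
  have key : ∀ t, a ≤ t → ppow c t = ppow c (t + d) := by
    intro t ht
    have h1 : ppow c t = pmul (ppow c (t - a)) (ppow c a) := by
      rw [ppow_add]; congr 1; omega
    rw [h1, base, ppow_add]
    congr 1; omega
  have key2 : ∀ k t, a ≤ t → ppow c t = ppow c (t + k * d) := by
    intro k
    induction k with
    | zero => intro t ht; simp
    | succ l ih =>
      intro t ht
      rw [ih t ht, key (t + l * d) (by omega)]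
      congr 1; ring
  refine ⟨a * d, Nat.mul_pos (by omega) (by omega), ?_⟩
  rw [ppow_add]
  have hkey := key2 a (a * d) (Nat.le_mul_of_pos_right a (by omega))
  exact hkey.symm

lemma exists_idem_pow (c : PM n) :
    ∃ m, 1 ≤ m ∧ pmul (ppow c m) (ppow c m) = ppow c m := by
  obtain ⟨x, y, hxy, hfe⟩ := Finite.exists_ne_map_eq_of_infinite (fun k : ℕ => ppow c (k + 1))
  rcases Ne.lt_or_gt hxy with hlt | hlt
  · exact exists_idem_pow' c hlt hfe
  · exact exists_idem_pow' c hlt hfe.symm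

lemma right_stability {a b : PM n} (h : rnk a ≤ rnk (pmul a b)) :
    ∃ w, pmul (pmul a b) w = a := by
  obtain ⟨γ, δ, hγδ⟩ := jrealize h
  have base : a = pmul γ (pmul a (pmul b δ)) := by
    conv_lhs => rw [← hγδ]
    rw [pmul_assoc, pmul_assoc]
  have iter : ∀ k, a = pmul (ppow γ k) (pmul a (ppow (pmul b δ) k)) := by
    intro k
    induction k with
    | zero => rw [ppow, ppow, pone_pmul, pmul_pone]
    | succ l ih =>
      have h1 : ppow (pmul b δ) (l + 1) = pmul (ppow (pmul b δ) l) (pmul b δ) := by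
        have h2 := ppow_add (pmul b δ) l 1
        rw [show ppow (pmul b δ) 1 = pmul b δ from by rw [ppow, ppow, pmul_pone]] at h2
        exact h2.symm
      calc a = pmul γ (pmul a (pmul b δ)) := base
        _ = pmul γ (pmul (pmul (ppow γ l) (pmul a (ppow (pmul b δ) l))) (pmul b δ)) := by
              rw [← ih]
        _ = pmul γ (pmul (ppow γ l) (pmul (pmul a (ppow (pmul b δ) l)) (pmul b δ))) := by
              rw [pmul_assoc (ppow γ l) (pmul a (ppow (pmul b δ) l)) (pmul b δ)]
        _ = pmul (pmul γ (ppow γ l)) (pmul (pmul a (ppow (pmul b δ) l)) (pmul b δ)) := by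
              rw [pmul_assoc γ (ppow γ l) (pmul (pmul a (ppow (pmul b δ) l)) (pmul b δ))]
        _ = pmul (ppow γ (l + 1)) (pmul a (pmul (ppow (pmul b δ) l) (pmul b δ))) := by
              rw [pmul_assoc a (ppow (pmul b δ) l) (pmul b δ)]
              rfl
        _ = pmul (ppow γ (l + 1)) (pmul a (ppow (pmul b δ) (l + 1))) := by rw [← h1]
  obtain ⟨m, hm1, hm2⟩ := exists_idem_pow (pmul b δ)
  have hae : pmul a (ppow (pmul b δ) m) = a := by
    calc pmul a (ppow (pmul b δ) m)
        = pmul (pmul (ppow γ m) (pmul a (ppow (pmul b δ) m))) (ppow (pmul b δ) m) := by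
          rw [← iter m]
      _ = pmul (ppow γ m) (pmul a (pmul (ppow (pmul b δ) m) (ppow (pmul b δ) m))) := by
          rw [pmul_assoc (ppow γ m) (pmul a (ppow (pmul b δ) m)) (ppow (pmul b δ) m),
            pmul_assoc a (ppow (pmul b δ) m) (ppow (pmul b δ) m)]
      _ = pmul (ppow γ m) (pmul a (ppow (pmul b δ) m)) := by rw [hm2]
      _ = a := (iter m).symm
  refine ⟨pmul δ (ppow (pmul b δ) (m - 1)), ?_⟩
  have hm : ppow (pmul b δ) m = pmul (pmul b δ) (ppow (pmul b δ) (m - 1)) := by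
    rw [← ppow]
    congr 1
    omega
  calc pmul (pmul a b) (pmul δ (ppow (pmul b δ) (m - 1)))
      = pmul a (pmul b (pmul δ (ppow (pmul b δ) (m - 1)))) := by
        rw [pmul_assoc]
    _ = pmul a (pmul (pmul b δ) (ppow (pmul b δ) (m - 1))) := by
        rw [pmul_assoc b δ (ppow (pmul b δ) (m - 1))]
    _ = pmul a (ppow (pmul b δ) m) := by rw [← hm]
    _ = a := hae

lemma left_stability {a b : PM n} (h : rnk a ≤ rnk (pmul b a)) :
    ∃ w, pmul w (pmul b a) = a := by
  have h' : rnk (pstar a) ≤ rnk (pmul (pstar a) (pstar b)) := by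
    rw [← pstar_pmul, rnk_pstar, rnk_pstar]; exact h
  obtain ⟨w, hw⟩ := right_stability h'
  refine ⟨pstar w, ?_⟩
  have h2 := congrArg pstar hw
  simp only [pstar_pmul, pstar_pstar] at h2
  exact h2
/- ############ abstract Green helpers ############ -/

section GenGreen

variable {M : Type*} (mul : M → M → M)
  (assoc : ∀ a b c, mul (mul a b) c = mul a (mul b c)) (e : M)

include assoc in
lemma greenR_iff (he : ∀ a, mul a e = a) (x y : M) :
    greenR mul x y ↔ (∃ c, mul x c = y) ∧ (∃ d, mul y d = x) := by
  constructor
  · intro h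
    constructor
    · have : y ∈ Set.range (mul x) := by rw [h]; exact ⟨e, he y⟩
      exact this
    · have : x ∈ Set.range (mul y) := by rw [← h]; exact ⟨e, he x⟩
      exact this
  · rintro ⟨⟨c, rfl⟩, ⟨d, hd⟩⟩
    apply Set.Subset.antisymm
    · rintro _ ⟨u, rfl⟩
      refine ⟨mul d u, ?_⟩
      rw [← assoc, hd]
    · rintro _ ⟨u, rfl⟩
      refine ⟨mul c u, ?_⟩
      rw [← assoc]

include assoc in
lemma greenL_iff (he : ∀ a, mul e a = a) (x y : M) :
    greenL mul x y ↔ (∃ c, mul c x = y) ∧ (∃ d, mul d y = x) := by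
  constructor
  · intro h
    constructor
    · have : y ∈ Set.range (fun a => mul a x) := by
        rw [show Set.range (fun a => mul a x) = Set.range (fun a => mul a y) from h]
        exact ⟨e, he y⟩
      exact this
    · have : x ∈ Set.range (fun a => mul a y) := by
        rw [← show Set.range (fun a => mul a x) = Set.range (fun a => mul a y) from h]
        exact ⟨e, he x⟩
      exact this
  · rintro ⟨⟨c, rfl⟩, ⟨d, hd⟩⟩
    apply Set.Subset.antisymm
    · rintro _ ⟨u, rfl⟩
      refine ⟨mul u d, ?_⟩
      show mul (mul u d) (mul c x) = mul u x
      rw [assoc, hd]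
    · rintro _ ⟨u, rfl⟩
      refine ⟨mul u c, ?_⟩
      show mul (mul u c) x = mul u (mul c x)
      exact assoc u c x

end GenGreen

/- ############ basic twisted-product facts ############ -/

lemma tmul_assoc (a b c : ℕ × PM n) : tmul (tmul a b) c = tmul a (tmul b c) := by
  unfold tmul
  refine Prod.ext ?_ ?_
  · simp only
    have := Phi_cocycle a.2 b.2 c.2
    omega
  · exact pmul_assoc _ _ _

lemma tmul_tone (a : ℕ × PM n) : tmul a (0, pone) = a := by
  unfold tmul
  refine Prod.ext ?_ ?_
  · simp [Phi_pone_right]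
  · exact pmul_pone _

lemma tone_tmul (a : ℕ × PM n) : tmul (0, pone) a = a := by
  unfold tmul
  refine Prod.ext ?_ ?_
  · simp [Phi_pone_left]
  · exact pone_pmul _

lemma greenR_pmul_iff {α β : PM n} :
    greenR pmul α β ↔ (∃ γ, pmul α γ = β) ∧ (∃ δ, pmul β δ = α) :=
  greenR_iff pmul pmul_assoc pone pmul_pone α β

lemma greenL_pmul_iff {α β : PM n} :
    greenL pmul α β ↔ (∃ γ, pmul γ α = β) ∧ (∃ δ, pmul δ β = α) :=
  greenL_iff pmul pmul_assoc pone pone_pmul α β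

lemma rnk_eq_of_greenR {α β : PM n} (h : greenR pmul α β) : rnk α = rnk β := by
  rw [greenR_pmul_iff] at h
  obtain ⟨⟨γ, hγ⟩, ⟨δ, hδ⟩⟩ := h
  refine le_antisymm ?_ ?_
  · rw [← hδ]; exact rnk_pmul_le_left _ _
  · rw [← hγ]; exact rnk_pmul_le_left _ _

lemma rnk_eq_of_greenL {α β : PM n} (h : greenL pmul α β) : rnk α = rnk β := by
  rw [greenL_pmul_iff] at h
  obtain ⟨⟨γ, hγ⟩, ⟨δ, hδ⟩⟩ := h
  refine le_antisymm ?_ ?_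
  · rw [← hδ]; exact rnk_pmul_le_right _ _
  · rw [← hγ]; exact rnk_pmul_le_right _ _

/- ############ Green's relations for the twisted product ############ -/

lemma greenR_tmul_pair (hn : 1 ≤ n) {i j : ℕ} {α β : PM n} :
    greenR (tmul (n := n)) (i, α) (j, β) ↔ i = j ∧ greenR (pmul (n := n)) α β := by
  rw [greenR_iff tmul tmul_assoc (0, pone) tmul_tone, greenR_pmul_iff]
  constructor
  · rintro ⟨⟨⟨c, γ⟩, hc⟩, ⟨⟨d, δ⟩, hd⟩⟩
    have hc1 : i + c + Phi α γ = j := congrArg Prod.fst hc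
    have hc2 : pmul α γ = β := congrArg Prod.snd hc
    have hd1 : j + d + Phi β δ = i := congrArg Prod.fst hd
    have hd2 : pmul β δ = α := congrArg Prod.snd hd
    exact ⟨by omega, ⟨γ, hc2⟩, ⟨δ, hd2⟩⟩
  · rintro ⟨rfl, ⟨γ₀, hγ⟩, ⟨δ₀, hδ⟩⟩
    obtain ⟨γ, hγ1, hγ2⟩ := float_elim_right hn α γ₀
    obtain ⟨δ, hδ1, hδ2⟩ := float_elim_right hn β δ₀
    constructor
    · refine ⟨(0, γ), ?_⟩
      unfold tmul
      refine Prod.ext ?_ ?_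
      · simp [hγ2]
      · simp only
        rw [hγ1, hγ]
    · refine ⟨(0, δ), ?_⟩
      unfold tmul
      refine Prod.ext ?_ ?_
      · simp [hδ2]
      · simp only
        rw [hδ1, hδ]

lemma greenL_tmul_pair (hn : 1 ≤ n) {i j : ℕ} {α β : PM n} :
    greenL (tmul (n := n)) (i, α) (j, β) ↔ i = j ∧ greenL (pmul (n := n)) α β := by
  rw [greenL_iff tmul tmul_assoc (0, pone) tone_tmul, greenL_pmul_iff]
  constructor
  · rintro ⟨⟨⟨c, γ⟩, hc⟩, ⟨⟨d, δ⟩, hd⟩⟩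
    have hc1 : c + i + Phi γ α = j := congrArg Prod.fst hc
    have hc2 : pmul γ α = β := congrArg Prod.snd hc
    have hd1 : d + j + Phi δ β = i := congrArg Prod.fst hd
    have hd2 : pmul δ β = α := congrArg Prod.snd hd
    exact ⟨by omega, ⟨γ, hc2⟩, ⟨δ, hd2⟩⟩
  · rintro ⟨rfl, ⟨γ₀, hγ⟩, ⟨δ₀, hδ⟩⟩
    obtain ⟨γ, hγ1, hγ2⟩ := float_elim_left hn α γ₀
    obtain ⟨δ, hδ1, hδ2⟩ := float_elim_left hn β δ₀
    constructor
    · refine ⟨(0, γ), ?_⟩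
      unfold tmul
      refine Prod.ext ?_ ?_
      · simp [hγ2]
      · simp only
        rw [hγ1, hγ]
    · refine ⟨(0, δ), ?_⟩
      unfold tmul
      refine Prod.ext ?_ ?_
      · simp [hδ2]
      · simp only
        rw [hδ1, hδ]

lemma greenD_pmul_iff {α β : PM n} : greenD pmul α β ↔ rnk α = rnk β := by
  constructor
  · rintro ⟨z, hR, hL⟩
    exact (rnk_eq_of_greenR hR).trans (rnk_eq_of_greenL hL)
  · intro h
    obtain ⟨γ, δ, hγδ⟩ := jrealize (le_of_eq h.symm)
    have hβ : pmul γ (pmul α δ) = β := by rw [← pmul_assoc, hγδ]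
    have hzα : rnk (pmul α δ) = rnk α := by
      refine le_antisymm (rnk_pmul_le_left _ _) ?_
      rw [h, ← hβ]
      exact rnk_pmul_le_right _ _
    refine ⟨pmul α δ, ?_, ?_⟩
    · rw [greenR_pmul_iff]
      refine ⟨⟨δ, rfl⟩, ?_⟩
      exact right_stability (le_of_eq hzα.symm)
    · rw [greenL_pmul_iff]
      refine ⟨⟨γ, hβ⟩, ?_⟩
      have hz : rnk (pmul α δ) ≤ rnk (pmul γ (pmul α δ)) := by
        rw [hβ, ← h]
        exact le_of_eq hzα
      obtain ⟨w, hw⟩ := left_stability hz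
      rw [hβ] at hw
      exact ⟨w, hw⟩

lemma jSet_pmul (α : PM n) : jSet (pmul (n := n)) α = {β | rnk β ≤ rnk α} := by
  ext β
  constructor
  · rintro ⟨⟨p1, p2⟩, rfl⟩
    show rnk (pmul (pmul p1 α) p2) ≤ rnk α
    calc rnk (pmul (pmul p1 α) p2) ≤ rnk (pmul p1 α) := rnk_pmul_le_left _ _
      _ ≤ rnk α := rnk_pmul_le_right _ _
  · intro h
    obtain ⟨γ, δ, hγδ⟩ := jrealize h
    exact ⟨(γ, δ), hγδ⟩

lemma greenJ_pmul_iff {α β : PM n} : greenJ (pmul (n := n)) α β ↔ rnk α = rnk β := by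
  show jSet _ _ = jSet _ _ ↔ _
  rw [jSet_pmul, jSet_pmul]
  constructor
  · intro h
    have h1 : α ∈ {β : PM n | rnk β ≤ rnk α} := show rnk α ≤ rnk α from le_refl _
    have h2 : β ∈ {γ : PM n | rnk γ ≤ rnk β} := show rnk β ≤ rnk β from le_refl _
    rw [h] at h1
    rw [← h] at h2
    exact le_antisymm h1 h2
  · intro h
    rw [h]

lemma jSet_tmul (hn : 1 ≤ n) (a : ℕ × PM n) :
    jSet (tmul (n := n)) a = {b : ℕ × PM n | a.1 ≤ b.1 ∧ rnk b.2 ≤ rnk a.2} := by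
  ext b
  constructor
  · rintro ⟨⟨p, q⟩, rfl⟩
    constructor
    · show a.1 ≤ (tmul (tmul p a) q).1
      unfold tmul
      simp only
      omega
    · show rnk (tmul (tmul p a) q).2 ≤ rnk a.2
      unfold tmul
      simp only
      calc rnk (pmul (pmul p.2 a.2) q.2) ≤ rnk (pmul p.2 a.2) := rnk_pmul_le_left _ _
        _ ≤ rnk a.2 := rnk_pmul_le_right _ _
  · rintro ⟨h1, h2⟩
    obtain ⟨γ₀, δ₀, hγδ⟩ := jrealize h2
    obtain ⟨γ, hγ1, hγ2⟩ := float_elim_left hn a.2 γ₀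
    obtain ⟨δ, hδ1, hδ2⟩ := float_elim_right hn (pmul γ a.2) δ₀
    refine ⟨((b.1 - a.1, γ), (0, δ)), ?_⟩
    show tmul (tmul (b.1 - a.1, γ) a) (0, δ) = b
    unfold tmul
    refine Prod.ext ?_ ?_
    · simp only [hγ2, hδ2]
      omega
    · simp only
      rw [hδ1, hγ1, hγδ]

lemma greenJ_tmul_pair (hn : 1 ≤ n) {i j : ℕ} {α β : PM n} :
    greenJ (tmul (n := n)) (i, α) (j, β) ↔ i = j ∧ greenJ (pmul (n := n)) α β := by
  rw [greenJ_pmul_iff]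
  show jSet _ _ = jSet _ _ ↔ _
  rw [jSet_tmul hn, jSet_tmul hn]
  constructor
  · intro h
    have h1 : ((i, α) : ℕ × PM n) ∈ {b : ℕ × PM n | i ≤ b.1 ∧ rnk b.2 ≤ rnk α} :=
      ⟨le_refl _, le_refl _⟩
    have h2 : ((j, β) : ℕ × PM n) ∈ {b : ℕ × PM n | j ≤ b.1 ∧ rnk b.2 ≤ rnk β} :=
      ⟨le_refl _, le_refl _⟩
    rw [h] at h1
    rw [← h] at h2
    exact ⟨le_antisymm h2.1 h1.1, le_antisymm h1.2 h2.2⟩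
  · rintro ⟨rfl, hr⟩
    rw [hr]

lemma greenD_tmul_pair (hn : 1 ≤ n) {i j : ℕ} {α β : PM n} :
    greenD (tmul (n := n)) (i, α) (j, β) ↔ i = j ∧ greenD (pmul (n := n)) α β := by
  constructor
  · rintro ⟨⟨k, ζ⟩, hR, hL⟩
    rw [greenR_tmul_pair hn] at hR
    rw [greenL_tmul_pair hn] at hL
    exact ⟨hR.1.trans hL.1, ⟨ζ, hR.2, hL.2⟩⟩
  · rintro ⟨rfl, ⟨ζ, hR, hL⟩⟩
    exact ⟨(i, ζ), (greenR_tmul_pair hn).2 ⟨rfl, hR⟩, (greenL_tmul_pair hn).2 ⟨rfl, hL⟩⟩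



/-- Green's relations on the twisted partition monoid: for each of
`R, L, J, H, D`, `(i,α) K (j,β)` in `P_n^Φ` iff `i = j` and `α K β` in `P_n`.  Moreover
`D = J` in `P_n^Φ`, the `D`-classes are exactly the sets `D_{qi} = {i} × D_q`, the
principal ideal generated by an element of `D_{qi}` is `I_{qi} = {i,i+1,…} × I_q`, and
`I_{qi} ⊆ I_{rj}` iff `q ≤ r` and `i ≥ j`. -/
theorem green_twisted (n : ℕ) (hn : 1 ≤ n) :
    (∀ (i j : ℕ) (α β : PM n),
      (greenR (tmul (n := n)) (i, α) (j, β) ↔ i = j ∧ greenR (pmul (n := n)) α β) ∧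
      (greenL (tmul (n := n)) (i, α) (j, β) ↔ i = j ∧ greenL (pmul (n := n)) α β) ∧
      (greenJ (tmul (n := n)) (i, α) (j, β) ↔ i = j ∧ greenJ (pmul (n := n)) α β) ∧
      (greenH (tmul (n := n)) (i, α) (j, β) ↔ i = j ∧ greenH (pmul (n := n)) α β) ∧
      (greenD (tmul (n := n)) (i, α) (j, β) ↔ i = j ∧ greenD (pmul (n := n)) α β)) ∧
    (∀ a b : ℕ × PM n, greenD (tmul (n := n)) a b ↔ greenJ (tmul (n := n)) a b) ∧
    (∀ a b : ℕ × PM n, greenD (tmul (n := n)) a b ↔ (a.1 = b.1 ∧ rnk a.2 = rnk b.2)) ∧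
    (∀ a : ℕ × PM n, jSet (tmul (n := n)) a =
      {b : ℕ × PM n | a.1 ≤ b.1 ∧ rnk b.2 ≤ rnk a.2}) ∧
    (∀ q r i j : ℕ, q ≤ n → r ≤ n →
      ({b : ℕ × PM n | i ≤ b.1 ∧ rnk b.2 ≤ q} ⊆ {b : ℕ × PM n | j ≤ b.1 ∧ rnk b.2 ≤ r} ↔
        (q ≤ r ∧ j ≤ i))) := by
  
  refine ⟨?_, ?_, ?_, ?_, ?_⟩
  · intro i j α β
    refine ⟨greenR_tmul_pair hn, greenL_tmul_pair hn, greenJ_tmul_pair hn, ?_, greenD_tmul_pair hn⟩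
    constructor
    · rintro ⟨hR, hL⟩
      rw [greenR_tmul_pair hn] at hR
      rw [greenL_tmul_pair hn] at hL
      exact ⟨hR.1, hR.2, hL.2⟩
    · rintro ⟨rfl, hR, hL⟩
      exact ⟨(greenR_tmul_pair hn).2 ⟨rfl, hR⟩, (greenL_tmul_pair hn).2 ⟨rfl, hL⟩⟩
  · rintro ⟨i, α⟩ ⟨j, β⟩
    rw [greenD_tmul_pair hn, greenJ_tmul_pair hn, greenD_pmul_iff, greenJ_pmul_iff]
  · rintro ⟨i, α⟩ ⟨j, β⟩
    rw [greenD_tmul_pair hn, greenD_pmul_iff]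
  · intro a
    exact jSet_tmul hn a
  · intro q r i j hq hr
    constructor
    · intro h
      have h1 : ((i, (eps q : PM n)) : ℕ × PM n) ∈ {b : ℕ × PM n | i ≤ b.1 ∧ rnk b.2 ≤ q} :=
        ⟨le_refl _, le_of_eq (rnk_eps hq)⟩
      obtain ⟨hji, hrq⟩ := h h1
      rw [show rnk ((i, (eps q : PM n)) : ℕ × PM n).2 = q from rnk_eps hq] at hrq
      exact ⟨hrq, hji⟩
    · rintro ⟨hqr, hji⟩ b ⟨hb1, hb2⟩
      exact ⟨le_trans hji hb1, le_trans hb2 hqr⟩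


end TPM
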